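/- arXiv:2501.12808 — 9 statements merged into one kernel-verified Lean document; each statement's English description precedes it below -/
import Mathlib

section
/- Let p > 1 and c > 0, and let E be a real normed vector space such that ‖z − ((1−t)·x₀ + t·x₁)‖^p ≤ (1−t)‖z − x₀‖^p + t‖z − x₁‖^p − c·t(1−t)‖x₀ − x₁‖^p for all x₀, x₁, z ∈ E and all t ∈ [0,1]. Let A ⊆ B be nonempty bounded subsets of E. Suppose c_A ∈ E and ρ_A ≥ 0 are such that A ⊆ closedBall(c_A, ρ_A) and ρ_A ≤ r whenever A ⊆ closedBall(x, r) for some x ∈ E and r ≥ 0, and suppose c_B ∈ E and ρ_B ≥ 0 satisfy the same two conditions with respect to B. Then c·‖c_B − c_A‖^p ≤ ρ_B^p − ρ_A^p. -/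
/- STATEMENT 0: Lemma 1.9 of the paper (specialized to normed spaces): if `E` is a
`(p,c)`-uniformly convex normed space and `A ⊆ B` are nonempty bounded subsets with
minimal enclosing balls `closedBall c_A ρ_A` and `closedBall c_B ρ_B`, then
`c‖c_B − c_A‖^p ≤ ρ_B^p − ρ_A^p`. -/
theorem circumcenter_displacement_le_of_subset
    {E : Type*} [NormedAddCommGroup E] [NormedSpace ℝ E]
    (p c : ℝ) (hp : 1 < p) (hc : 0 < c)
    (hconv : ∀ x₀ x₁ z : E, ∀ t ∈ Set.Icc (0:ℝ) 1,
      ‖z - ((1 - t) • x₀ + t • x₁)‖ ^ p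
        ≤ (1 - t) * ‖z - x₀‖ ^ p + t * ‖z - x₁‖ ^ p - c * t * (1 - t) * ‖x₀ - x₁‖ ^ p)
    (A B : Set E) (hA : A.Nonempty) (hAB : A ⊆ B) (hB : Bornology.IsBounded B)
    (cA : E) (ρA : ℝ) (hρA : 0 ≤ ρA)
    (hAball : A ⊆ Metric.closedBall cA ρA)
    (hAmin : ∀ (x : E) (r : ℝ), 0 ≤ r → A ⊆ Metric.closedBall x r → ρA ≤ r)
    (cB : E) (ρB : ℝ) (hρB : 0 ≤ ρB)
    (hBball : B ⊆ Metric.closedBall cB ρB)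
    (hBmin : ∀ (x : E) (r : ℝ), 0 ≤ r → B ⊆ Metric.closedBall x r → ρB ≤ r) :
    c * ‖cB - cA‖ ^ p ≤ ρB ^ p - ρA ^ p := by
  have hp0 : (0:ℝ) < p := lt_trans one_pos hp
  set D : ℝ := ‖cB - cA‖ ^ p with hD
  have hD0 : 0 ≤ D := Real.rpow_nonneg (norm_nonneg _) p
  -- key inequality for small t
  have key : ∀ t ∈ Set.Ioc (0:ℝ) 1, c * (1 - t) * D ≤ ρB ^ p - ρA ^ p := by
    intro t ht
    obtain ⟨ht0, ht1⟩ := ht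
    set m : E := (1 - t) • cA + t • cB with hm
    set R : ℝ := (1 - t) * ρA ^ p + t * ρB ^ p - c * t * (1 - t) * D with hR
    have hzR : ∀ z ∈ A, ‖z - m‖ ^ p ≤ R := by
      intro z hz
      have h1 := hconv cA cB z t ⟨le_of_lt ht0, ht1⟩
      have hza : ‖z - cA‖ ≤ ρA := by
        simpa [dist_eq_norm] using hAball hz
      have hzb : ‖z - cB‖ ≤ ρB := by
        simpa [dist_eq_norm] using hBball (hAB hz)
      have hza' : ‖z - cA‖ ^ p ≤ ρA ^ p :=
        Real.rpow_le_rpow (norm_nonneg _) hza (le_of_lt hp0)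
      have hzb' : ‖z - cB‖ ^ p ≤ ρB ^ p :=
        Real.rpow_le_rpow (norm_nonneg _) hzb (le_of_lt hp0)
      have hrev : ‖cA - cB‖ ^ p = D := by rw [hD, norm_sub_rev]
      have h1t : (0:ℝ) ≤ 1 - t := by linarith
      calc ‖z - m‖ ^ p ≤ (1 - t) * ‖z - cA‖ ^ p + t * ‖z - cB‖ ^ p
            - c * t * (1 - t) * ‖cA - cB‖ ^ p := h1
        _ ≤ R := by
            rw [hrev, hR]
            have := mul_le_mul_of_nonneg_left hza' h1t
            have := mul_le_mul_of_nonneg_left hzb' (le_of_lt ht0)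
            linarith
    obtain ⟨z, hz⟩ := hA
    have hR0 : 0 ≤ R := le_trans (Real.rpow_nonneg (norm_nonneg _) p) (hzR z hz)
    set r : ℝ := R ^ p⁻¹ with hr
    have hr0 : 0 ≤ r := Real.rpow_nonneg hR0 _
    have hrp : r ^ p = R := Real.rpow_inv_rpow hR0 (ne_of_gt hp0)
    have hsub : A ⊆ Metric.closedBall m r := by
      intro w hw
      have hw' := hzR w hw
      rw [Metric.mem_closedBall, dist_eq_norm]
      rw [← hrp] at hw'
      exact (Real.rpow_le_rpow_iff (norm_nonneg _) hr0 hp0).mp hw'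
    have hle : ρA ≤ r := hAmin m r hr0 hsub
    have hle' : ρA ^ p ≤ R := by
      rw [← hrp]; exact Real.rpow_le_rpow hρA hle (le_of_lt hp0)
    rw [hR] at hle'
    have h2 : t * ρA ^ p + c * t * (1 - t) * D ≤ t * ρB ^ p := by linarith
    have h3 : ρA ^ p + c * (1 - t) * D ≤ ρB ^ p := by
      have := (mul_le_mul_iff_right₀ ht0).mp (by linarith [h2] : t * (ρA ^ p + c * (1 - t) * D) ≤ t * (ρB ^ p))
      linarith
    linarith
  -- take the limit t → 0⁺
  have hlim : Filter.Tendsto (fun t : ℝ => c * (1 - t) * D) (nhdsWithin 0 (Set.Ioi 0))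
      (nhds (c * D)) := by
    have : Filter.Tendsto (fun t : ℝ => c * (1 - t) * D) (nhds 0) (nhds (c * (1 - 0) * D)) := Filter.Tendsto.mul (tendsto_const_nhds.mul ((tendsto_const_nhds).sub Filter.tendsto_id)) tendsto_const_nhds
    simpa using this.mono_left nhdsWithin_le_nhds
  have hev : ∀ᶠ t in nhdsWithin (0:ℝ) (Set.Ioi 0), c * (1 - t) * D ≤ ρB ^ p - ρA ^ p := by
    filter_upwards [Ioc_mem_nhdsGT_of_mem ⟨le_refl (0:ℝ), one_pos⟩] with t ht
    exact key t ht
  exact le_of_tendsto hlim hev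
end

section
/- Let G be a group with a symmetric subset S containing the identity, acting by (surjective) isometries on a metric space X, and let v ∈ X and n ≥ 1 be such that the orbit set S^n · v = {g·v : g ∈ S^n} is bounded. Define ρ_n(v) := inf{r ≥ 0 : S^n · v ⊆ closedBall(x, r) for some x ∈ X} and a_n(v) := sup_{g ∈ S^n} d(g·v, v). Then 2·ρ_n(v) ≥ a_{2n}(v) ≥ a_n(v) ≥ ρ_n(v). -/
open Pointwise

noncomputable section

/-- The circumradius of a subset of a metric space: the infimum of the radii of closed
balls containing it. -/
def circumradius {X : Type*} [PseudoMetricSpace X] (A : Set X) : ℝ :=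
  sInf {r : ℝ | 0 ≤ r ∧ ∃ x : X, A ⊆ Metric.closedBall x r}

/- STATEMENT 3: for an action of `G` by isometries on a metric space `X`, a symmetric
subset `S ∋ 1`, `v ∈ X` and `n ≥ 1` with bounded orbit set `Sⁿ·v`, one has
`2ρₙ(v) ≥ a_{2n}(v) ≥ aₙ(v) ≥ ρₙ(v)`. -/
theorem circumradius_le_sup_displacement
    {X : Type*} [MetricSpace X] {G : Type*} [Group G]
    (S : Set G) (hSsymm : S⁻¹ = S) (hSone : (1 : G) ∈ S)
    (φ : G →* (X ≃ᵢ X)) (v : X) (n : ℕ) (hn : 1 ≤ n)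
    (hbdd : Bornology.IsBounded ((fun g => φ g v) '' (S ^ n))) :
    sSup ((fun g => dist (φ g v) v) '' (S ^ (2 * n)))
        ≤ 2 * circumradius ((fun g => φ g v) '' (S ^ n)) ∧
      sSup ((fun g => dist (φ g v) v) '' (S ^ n))
        ≤ sSup ((fun g => dist (φ g v) v) '' (S ^ (2 * n))) ∧
      circumradius ((fun g => φ g v) '' (S ^ n))
        ≤ sSup ((fun g => dist (φ g v) v) '' (S ^ n)) := by
  have hone : (1 : G) ∈ S ^ n := Set.one_mem_pow hSone
  have hinv : ∀ g ∈ S ^ n, g⁻¹ ∈ S ^ n := by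
    intro g hg
    have h : (S ^ n)⁻¹ = S ^ n := by rw [← inv_pow, hSsymm]
    rw [← h, Set.mem_inv, inv_inv]; exact hg
  have hsplit : ∀ g ∈ S ^ (2 * n), ∃ g1 ∈ S ^ n, ∃ g2 ∈ S ^ n, g = g1 * g2 := by
    intro g hg
    rw [two_mul, pow_add] at hg
    rcases Set.mem_mul.1 hg with ⟨g1, hg1, g2, hg2, rfl⟩
    exact ⟨g1, hg1, g2, hg2, rfl⟩
  -- core estimate
  have key : ∀ r : ℝ, ∀ x : X, ((fun g => φ g v) '' (S ^ n)) ⊆ Metric.closedBall x r →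
      ∀ g ∈ S ^ (2 * n), dist (φ g v) v ≤ 2 * r := by
    intro r x hx g hg
    rcases hsplit g hg with ⟨g1, hg1, g2, hg2, rfl⟩
    have h1 : dist (φ g2 v) x ≤ r := hx ⟨g2, hg2, rfl⟩
    have h2 : dist (φ g1⁻¹ v) x ≤ r := hx ⟨g1⁻¹, hinv g1 hg1, rfl⟩
    have e1 : φ (g1 * g2) v = φ g1 (φ g2 v) := by rw [map_mul]; rfl
    have e2 : dist (φ g1 x) v = dist x (φ g1⁻¹ v) := by
      have := (φ g1⁻¹).dist_eq (φ g1 x) v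
      rw [← this]
      congr 1
      have : φ g1⁻¹ (φ g1 x) = φ (g1⁻¹ * g1) x := by rw [map_mul]; rfl
      rw [this, inv_mul_cancel, map_one]; rfl
    calc dist (φ (g1 * g2) v) v
        ≤ dist (φ (g1 * g2) v) (φ g1 x) + dist (φ g1 x) v := dist_triangle _ _ _
      _ = dist (φ g2 v) x + dist x (φ g1⁻¹ v) := by
          rw [e1, (φ g1).dist_eq, e2]
      _ ≤ r + r := add_le_add h1 (by rwa [dist_comm])
      _ = 2 * r := by ring
  -- a nonneg radius
  obtain ⟨r0, hr0⟩ := hbdd.subset_closedBall v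
  have hr0' : ((fun g => φ g v) '' (S ^ n)) ⊆ Metric.closedBall v (max r0 0) :=
    hr0.trans (Metric.closedBall_subset_closedBall (le_max_left _ _))
  have hmemset : max r0 0 ∈ {r : ℝ | 0 ≤ r ∧ ∃ x : X, ((fun g => φ g v) '' (S ^ n)) ⊆ Metric.closedBall x r} :=
    ⟨le_max_right _ _, v, hr0'⟩
  have hsub : S ^ n ⊆ S ^ (2 * n) := by
    intro g hg
    rw [two_mul, pow_add]
    have := Set.mul_mem_mul hg hone
    rwa [mul_one] at this
  have hne2 : ((fun g => dist (φ g v) v) '' (S ^ (2 * n))).Nonempty :=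
    ⟨_, ⟨1, hsub hone, rfl⟩⟩
  have hbdd2 : BddAbove ((fun g => dist (φ g v) v) '' (S ^ (2 * n))) := by
    refine ⟨2 * max r0 0, ?_⟩
    rintro _ ⟨g, hg, rfl⟩
    exact key _ v hr0' g hg
  have hne1 : ((fun g => dist (φ g v) v) '' (S ^ n)).Nonempty := ⟨_, ⟨1, hone, rfl⟩⟩
  have hbdd1 : BddAbove ((fun g => dist (φ g v) v) '' (S ^ n)) :=
    hbdd2.mono (Set.image_mono hsub)
  refine ⟨?_, ?_, ?_⟩
  · -- sSup 2n ≤ 2 * circumradius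
    rw [show (2 : ℝ) * circumradius ((fun g => φ g v) '' (S ^ n))
        = 2 * sInf {r : ℝ | 0 ≤ r ∧ ∃ x : X, ((fun g => φ g v) '' (S ^ n)) ⊆ Metric.closedBall x r} from rfl]
    have : sSup ((fun g => dist (φ g v) v) '' (S ^ (2 * n))) / 2
        ≤ sInf {r : ℝ | 0 ≤ r ∧ ∃ x : X, ((fun g => φ g v) '' (S ^ n)) ⊆ Metric.closedBall x r} := by
      apply le_csInf ⟨_, hmemset⟩
      rintro r ⟨hr, x, hx⟩
      rw [div_le_iff₀ (by norm_num)]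
      apply Real.sSup_le _ (by positivity)
      rintro _ ⟨g, hg, rfl⟩
      rw [mul_comm]
      exact key r x hx g hg
    linarith
  · exact csSup_le_csSup hbdd2 hne1 (Set.image_mono hsub)
  · -- circumradius ≤ sSup n
    apply csInf_le ⟨0, fun r hr => hr.1⟩
    refine ⟨?_, v, ?_⟩
    · have : dist (φ (1:G) v) v ≤ sSup ((fun g => dist (φ g v) v) '' (S ^ n)) :=
        le_csSup hbdd1 ⟨1, hone, rfl⟩
      simpa using le_trans dist_nonneg this
    · rintro _ ⟨g, hg, rfl⟩
      exact le_csSup hbdd1 ⟨g, hg, rfl⟩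
end
end

section
/- Let G be a locally compact second countable topological group, E a separable real Banach space, and π : G → O(E) a strongly continuous isometric linear representation. Let b : G → E be a Borel measurable map satisfying the cocycle relation b(gh) = b(g) + π(g)b(h) for all g, h ∈ G. Then b is continuous. -/
open MeasureTheory Pointwise Filter Topology

/- STATEMENT 6: a Borel measurable map satisfying the 1-cocycle relation for a strongly
continuous isometric linear representation of a locally compact second countable group
on a separable Banach space is automatically continuous. -/
theorem continuous_of_measurable_cocycle
    {G : Type*} [Group G] [TopologicalSpace G] [IsTopologicalGroup G]
    [LocallyCompactSpace G] [SecondCountableTopology G]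
    [MeasurableSpace G] [BorelSpace G]
    {E : Type*} [NormedAddCommGroup E] [NormedSpace ℝ E] [CompleteSpace E]
    [TopologicalSpace.SeparableSpace E] [MeasurableSpace E] [BorelSpace E]
    (π : G →* (E ≃ₗᵢ[ℝ] E)) (hπ : ∀ x : E, Continuous fun g : G => π g x)
    (b : G → E) (hb : Measurable b)
    (hcoc : ∀ g h : G, b (g * h) = b g + π g (b h)) :
    Continuous b := by
  -- `b 1 = 0`
  have hb1 : b 1 = 0 := by
    have h := hcoc 1 1
    simp only [mul_one, map_one, LinearIsometryEquiv.coe_one, id_eq] at h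
    nth_rewrite 1 [← add_zero (b 1)] at h
    exact (add_left_cancel h).symm
  -- `‖b g⁻¹‖ = ‖b g‖`
  have hninv : ∀ g : G, ‖b g⁻¹‖ = ‖b g‖ := by
    intro g
    have h := hcoc g⁻¹ g
    rw [inv_mul_cancel, hb1] at h
    have h' : b g⁻¹ = -(π g⁻¹ (b g)) := eq_neg_of_add_eq_zero_left h.symm
    rw [h', norm_neg, (π g⁻¹).norm_map]
  -- norm of translated cocycle
  have htrans : ∀ g h : G, ‖b (g⁻¹ * h)‖ = ‖b h - b g‖ := by
    intro g h
    have h1 := hcoc g (g⁻¹ * h)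
    rw [mul_inv_cancel_left] at h1
    have h2 : π g (b (g⁻¹ * h)) = b h - b g := (eq_sub_of_add_eq' h1.symm)
    calc ‖b (g⁻¹ * h)‖ = ‖π g (b (g⁻¹ * h))‖ := ((π g).norm_map _).symm
      _ = ‖b h - b g‖ := by rw [h2]
  -- continuity at the identity
  have key : Tendsto b (𝓝 (1 : G)) (𝓝 (0 : E)) := by
    rw [NormedAddCommGroup.tendsto_nhds_zero]
    intro ε hε
    set μ : Measure G := Measure.haar with hμ
    set B : Set G := {g | ‖b g‖ < ε / 2} with hBdef
    have hBmeas : MeasurableSet B := measurableSet_lt hb.norm measurable_const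
    -- B has positive Haar measure
    have hBpos : 0 < μ B := by
      rcases eq_or_lt_of_le (zero_le : (0 : ENNReal) ≤ μ B) with hB0 | h
      · exfalso
        obtain ⟨D, hDcount, hDdense⟩ := TopologicalSpace.exists_countable_dense E
        set A : E → Set G := fun v => {g | ‖b g - v‖ < ε / 4} with hAdef
        have hAnull : ∀ v ∈ D, μ (A v) = 0 := by
          intro v _
          rcases Set.eq_empty_or_nonempty (A v) with hAe | ⟨h0, h0A⟩
          · simp [hAe]
          · have hsub : A v ⊆ h0 • B := by
              intro g hg
              have : ‖b (h0⁻¹ * g)‖ < ε / 2 := by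
                rw [htrans]
                calc ‖b g - b h0‖ ≤ ‖b g - v‖ + ‖v - b h0‖ := by
                      simpa using norm_sub_le_norm_sub_add_norm_sub (b g) v (b h0)
                  _ < ε / 4 + ε / 4 := by
                      refine add_lt_add hg ?_
                      rw [norm_sub_rev]; exact h0A
                  _ = ε / 2 := by ring
              exact ⟨h0⁻¹ * g, this, by simp⟩
            have : μ (A v) ≤ μ (h0 • B) := measure_mono hsub
            rw [measure_smul] at this
            exact le_antisymm (this.trans_eq hB0.symm) zero_le
        have huniv : μ (Set.univ : Set G) = 0 := by
          have hcover : (Set.univ : Set G) ⊆ ⋃ v ∈ D, A v := by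
            intro g _
            obtain ⟨v, hvD, hv⟩ := hDdense.exists_dist_lt (b g) (by positivity : (0:ℝ) < ε / 4)
            exact Set.mem_biUnion hvD (by simpa [hAdef, ← dist_eq_norm] using hv)
          refine measure_mono_null hcover ?_
          exact (measure_biUnion_null_iff hDcount).2 hAnull
        have : 0 < μ (Set.univ : Set G) :=
          isOpen_univ.measure_pos μ Set.univ_nonempty
        exact this.ne' huniv
      · exact h
    -- Steinhaus: B / B is a neighbourhood of 1
    have hBB : B / B ∈ 𝓝 (1 : G) :=
      Measure.div_mem_nhds_one_of_haar_pos μ B hBmeas hBpos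
    filter_upwards [hBB] with x hx
    obtain ⟨h, hh, k, hk, rfl⟩ := hx
    have hx1 : b (h / k) = b h + π h (b k⁻¹) := by
      rw [div_eq_mul_inv]; exact hcoc h k⁻¹
    calc ‖b (h / k)‖ ≤ ‖b h‖ + ‖π h (b k⁻¹)‖ := by rw [hx1]; exact norm_add_le _ _
      _ = ‖b h‖ + ‖b k‖ := by rw [(π h).norm_map, hninv]
      _ < ε / 2 + ε / 2 := add_lt_add hh hk
      _ = ε := by ring
  -- continuity everywhere
  rw [continuous_iff_continuousAt]
  intro g₀
  have h1 : Tendsto (fun g : G => g₀⁻¹ * g) (𝓝 g₀) (𝓝 (1 : G)) := by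
    have hc : Continuous fun g : G => g₀⁻¹ * g := continuous_const.mul continuous_id
    simpa using hc.tendsto g₀
  have h2 : Tendsto (fun g : G => b (g₀⁻¹ * g)) (𝓝 g₀) (𝓝 (0 : E)) := key.comp h1
  have h3 : Tendsto (fun g : G => (π g₀) (b (g₀⁻¹ * g))) (𝓝 g₀) (𝓝 (0 : E)) := by
    have := ((π g₀).continuous.tendsto 0).comp h2
    simpa [Function.comp_def] using this
  have h4 : Tendsto (fun g : G => b g₀ + (π g₀) (b (g₀⁻¹ * g))) (𝓝 g₀) (𝓝 (b g₀)) := by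
    have := h3.const_add (b g₀)
    simpa using this
  exact h4.congr fun g => by rw [← hcoc g₀ (g₀⁻¹ * g), mul_inv_cancel_left]
end

section
/- Let G be a locally compact second countable, compactly generated group with compact symmetric generating set S, let μ be a cohomologically adapted probability measure on G, let 1 ≤ p < ∞, let E be a separable real Banach space and π : G → O(E) a strongly continuous isometric linear representation. Then there exists C ≥ 1 such that for every continuous 1-cocycle b ∈ Z¹(G, π): C⁻¹ · sup_{g ∈ S} ‖b(g)‖ ≤ (∫_G ‖b(g)‖^p dμ(g))^{1/p} ≤ C · sup_{g ∈ S} ‖b(g)‖. -/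
open Pointwise MeasureTheory Filter Set
open scoped ENNReal Topology
set_option linter.unusedVariables false
set_option linter.unusedSectionVars false

noncomputable section

/-- The word length of `g` with respect to a generating set `S`:
`|g|_S = min {n : g ∈ Sⁿ}`. -/
def wordLength {G : Type*} [Monoid G] (S : Set G) (g : G) : ℕ :=
  sInf {n : ℕ | g ∈ S ^ n}

/-- The `n`-fold convolution power `μ^{*n}` of a measure on a group
(with `μ^{*0} = δ₁`). -/
def convPow {G : Type*} [Monoid G] [MeasurableSpace G]
    (μ : MeasureTheory.Measure G) : ℕ → MeasureTheory.Measure G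
  | 0 => MeasureTheory.Measure.dirac 1
  | n + 1 => MeasureTheory.Measure.map (fun q : G × G => q.1 * q.2)
      ((convPow μ n).prod μ)

/-- A Borel probability measure `μ` on a locally compact compactly generated group `G`
with compact symmetric generating set `S` is cohomologically adapted if it is symmetric,
absolutely continuous with respect to the Haar measure, its support contains `S`, its
density is essentially bounded below by a positive constant on `S`, and it has finite
`p`-moments for all `1 ≤ p < ∞`. -/
structure CohomologicallyAdapted {G : Type*} [Group G] [TopologicalSpace G]
    [IsTopologicalGroup G] [LocallyCompactSpace G] [MeasurableSpace G] [BorelSpace G]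
    (S : Set G) (μ : MeasureTheory.Measure G) : Prop where
  isProb : MeasureTheory.IsProbabilityMeasure μ
  symmetric : MeasureTheory.Measure.map (fun g => g⁻¹) μ = μ
  absCont : μ.AbsolutelyContinuous MeasureTheory.Measure.haar
  suppContains : ∀ g ∈ S, ∀ U : Set G, IsOpen U → g ∈ U → 0 < μ U
  densityBounded : ∃ ε : ℝ≥0∞, 0 < ε ∧
    ∀ᵐ x ∂((MeasureTheory.Measure.haar : MeasureTheory.Measure G).restrict S),
      ε ≤ μ.rnDeriv MeasureTheory.Measure.haar x
  finiteMoments : ∀ p : ℝ, 1 ≤ p →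
    MeasureTheory.Integrable (fun g => (wordLength S g : ℝ) ^ p) μ

private lemma aux_rpow_add_le {p : ℝ} (hp : 1 ≤ p) {x y : ℝ} (hx : 0 ≤ x) (hy : 0 ≤ y) :
    (x + y) ^ p ≤ 2 ^ p * (x ^ p + y ^ p) := by
  have hp0 : 0 ≤ p := by linarith
  have h1 : x + y ≤ 2 * max x y := by
    rcases le_total x y with h | h
    · rw [max_eq_right h]; linarith
    · rw [max_eq_left h]; linarith
  have h2 : (x + y) ^ p ≤ (2 * max x y) ^ p :=
    Real.rpow_le_rpow (add_nonneg hx hy) h1 hp0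
  have h3 : (2 * max x y) ^ p = 2 ^ p * (max x y) ^ p :=
    Real.mul_rpow (by norm_num) (le_max_of_le_left hx)
  have h4 : (max x y) ^ p ≤ x ^ p + y ^ p := by
    rcases le_total x y with h | h
    · rw [max_eq_right h]
      have := Real.rpow_nonneg hx p; linarith
    · rw [max_eq_left h]
      have := Real.rpow_nonneg hy p; linarith
  calc (x + y) ^ p ≤ 2 ^ p * (max x y) ^ p := by rw [← h3]; exact h2
    _ ≤ 2 ^ p * (x ^ p + y ^ p) := by
        have : (0:ℝ) ≤ 2 ^ p := Real.rpow_nonneg (by norm_num) p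
        nlinarith

section Grp
variable {G : Type*} [Group G] [TopologicalSpace G] [IsTopologicalGroup G]
    [MeasurableSpace G] [BorelSpace G] [SecondCountableTopology G]

private lemma aux_setLIntegral_mul_left (lam : Measure G) [lam.IsMulLeftInvariant]
    {F : G → ℝ≥0∞} (hF : Measurable F) (g : G) {W : Set G} (hW : MeasurableSet W) :
    ∫⁻ h in W, F (g * h) ∂lam = ∫⁻ u in (fun h => g * h) '' W, F u ∂lam := by
  have hinj : Function.Injective (fun h : G => g * h) := fun a b h => by
    simpa using mul_left_cancel h
  have hmeas : MeasurableSet ((fun h => g * h) '' W) :=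
    (MeasurableEquiv.mulLeft g).measurableSet_image.2 hW
  have hmap : Measure.map (fun h => g * h) lam = lam :=
    (measurePreserving_mul_left lam g).map_eq
  calc ∫⁻ h in W, F (g * h) ∂lam
      = ∫⁻ u in (fun h => g * h) '' W, F u ∂(Measure.map (fun h => g * h) lam) := by
        rw [setLIntegral_map hmeas hF (measurable_const_mul g),
          Set.preimage_image_eq _ hinj]
    _ = ∫⁻ u in (fun h => g * h) '' W, F u ∂lam := by rw [hmap]

private lemma aux_conv_apply (μ ρ : Measure G) [SFinite ρ] {A : Set G}
    (hA : MeasurableSet A) :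
    (Measure.map (fun q : G × G => q.1 * q.2) (μ.prod ρ)) A
      = ∫⁻ g, ρ ((fun h => g * h) ⁻¹' A) ∂μ := by
  rw [Measure.map_apply measurable_mul hA, Measure.prod_apply (measurable_mul hA)]
  rfl

private lemma aux_lintegral_conv_le (μ ρ : Measure G) [IsProbabilityMeasure μ]
    [IsProbabilityMeasure ρ] {F : G → ℝ≥0∞} (hF : Measurable F) {κ : ℝ≥0∞}
    (hsub : ∀ g h, F (g * h) ≤ κ * (F g + F h)) :
    ∫⁻ x, F x ∂(Measure.map (fun q : G × G => q.1 * q.2) (μ.prod ρ))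
      ≤ κ * (∫⁻ x, F x ∂μ + ∫⁻ x, F x ∂ρ) := by
  rw [lintegral_map hF measurable_mul]
  have h1 : ∫⁻ q : G × G, F (q.1 * q.2) ∂(μ.prod ρ)
      ≤ ∫⁻ q : G × G, κ * (F q.1 + F q.2) ∂(μ.prod ρ) :=
    lintegral_mono fun q => hsub q.1 q.2
  refine h1.trans ?_
  have hm1 : Measurable fun q : G × G => F q.1 := hF.comp measurable_fst
  have hm2 : Measurable fun q : G × G => F q.2 := hF.comp measurable_snd
  rw [lintegral_const_mul _ (f := fun q : G × G => F q.1 + F q.2) (hm1.add hm2)]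
  apply mul_le_mul_right
  rw [lintegral_add_left hm1]
  have h2 : ∫⁻ q : G × G, F q.1 ∂(μ.prod ρ) = ∫⁻ x, F x ∂μ := by
    rw [← lintegral_map hF measurable_fst, Measure.map_fst_prod, measure_univ, one_smul]
  have h3 : ∫⁻ q : G × G, F q.2 ∂(μ.prod ρ) = ∫⁻ x, F x ∂ρ := by
    rw [← lintegral_map hF measurable_snd, Measure.map_snd_prod, measure_univ, one_smul]
  rw [h2, h3]

end Grp

section Grp
variable {G : Type*} [Group G] [TopologicalSpace G] [IsTopologicalGroup G]
    [LocallyCompactSpace G] [MeasurableSpace G] [BorelSpace G] [SecondCountableTopology G]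

private lemma aux_T (lam : Measure G) [lam.IsHaarMeasure] [lam.Regular]
    {B : Set G} (hB : MeasurableSet B) (hBfin : lam B ≠ ∞) {ε : ℝ≥0∞} (hε : 0 < ε) :
    ∃ V : Set G, IsOpen V ∧ (1 : G) ∈ V ∧ ∀ v ∈ V, lam (B \ v • B) ≤ ε := by
  have hε2 : (ε / 2) ≠ 0 := (ENNReal.half_pos hε.ne').ne'
  obtain ⟨K, hKB, hKc, hKcl, hKd⟩ := hB.exists_isCompact_isClosed_diff_lt hBfin hε2
  have hev : ∀ᶠ g in 𝓝 (1 : G), lam (g • K \ K) < ε / 2 :=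
    eventually_nhds_one_measure_smul_diff_lt (μ := lam) hKc hKcl hε2
  obtain ⟨V₀, hV₀sub, hV₀o, hV₀1⟩ := mem_nhds_iff.1 hev
  refine ⟨V₀ ∩ V₀⁻¹, hV₀o.inter hV₀o.inv, ⟨hV₀1, by simpa using hV₀1⟩, ?_⟩
  rintro v ⟨hv1, hv2⟩
  have hsub : B \ v • B ⊆ (B \ K) ∪ (K \ v • K) := by
    intro x hx
    by_cases hxK : x ∈ K
    · exact Or.inr ⟨hxK, fun hxvK => hx.2 (smul_set_mono hKB hxvK)⟩
    · exact Or.inl ⟨hx.1, hxK⟩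
  have h2 : lam (K \ v • K) < ε / 2 := by
    have : K \ v • K = v • (v⁻¹ • K \ K) := by
      rw [smul_set_sdiff, smul_inv_smul]
    rw [this, measure_smul]
    exact hV₀sub (by simpa using hv2)
  calc lam (B \ v • B) ≤ lam (B \ K) + lam (K \ v • K) :=
        (measure_mono hsub).trans (measure_union_le _ _)
    _ ≤ ε / 2 + ε / 2 := add_le_add hKd.le h2.le
    _ = ε := ENNReal.add_halves ε

/-- left convolution powers: `leftConvAux μ n = μ^{*(n+1)}` (convolved on the left). -/
private def leftConvAux (μ : Measure G) : ℕ → Measure G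
  | 0 => μ
  | n + 1 => Measure.map (fun q : G × G => q.1 * q.2) (μ.prod (leftConvAux μ n))

private lemma aux_leftConvAux_prob (μ : Measure G) [IsProbabilityMeasure μ] (n : ℕ) :
    IsProbabilityMeasure (leftConvAux μ n) := by
  induction n with
  | zero => simpa [leftConvAux] using inferInstanceAs (IsProbabilityMeasure μ)
  | succ n ih =>
    haveI := ih
    exact Measure.isProbabilityMeasure_map measurable_mul.aemeasurable

private def aux_an (κ : ℝ≥0∞) : ℕ → ℝ≥0∞
  | 0 => 1
  | n + 1 => κ * (1 + aux_an κ n)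

private lemma aux_an_ne_top {κ : ℝ≥0∞} (hκ : κ ≠ ∞) (n : ℕ) : aux_an κ n ≠ ∞ := by
  induction n with
  | zero => simp [aux_an]
  | succ n ih => simp only [aux_an]; exact ENNReal.mul_ne_top hκ (by simp [ih])

private lemma aux_leftConvAux_bound (μ : Measure G) [IsProbabilityMeasure μ]
    {F : G → ℝ≥0∞} (hF : Measurable F) {κ : ℝ≥0∞}
    (hsub : ∀ g h, F (g * h) ≤ κ * (F g + F h)) (n : ℕ) :
    ∫⁻ x, F x ∂(leftConvAux μ n) ≤ aux_an κ n * ∫⁻ x, F x ∂μ := by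
  induction n with
  | zero => simp [leftConvAux, aux_an]
  | succ n ih =>
    haveI := aux_leftConvAux_prob μ n
    have h1 := aux_lintegral_conv_le μ (leftConvAux μ n) hF hsub
    refine h1.trans ?_
    calc κ * (∫⁻ x, F x ∂μ + ∫⁻ x, F x ∂(leftConvAux μ n))
        ≤ κ * (∫⁻ x, F x ∂μ + aux_an κ n * ∫⁻ x, F x ∂μ) := by
          exact mul_le_mul_right (add_le_add_right ih _) κ
      _ = aux_an κ (n + 1) * ∫⁻ x, F x ∂μ := by
          simp only [aux_an]; ring

end Grp

section Grp
variable {G : Type*} [Group G] [TopologicalSpace G] [IsTopologicalGroup G]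
    [LocallyCompactSpace G] [MeasurableSpace G] [BorelSpace G] [SecondCountableTopology G]

private lemma aux_leftConvAux_zero (μ : Measure G) : leftConvAux μ 0 = μ := rfl

private lemma aux_leftConvAux_succ (μ : Measure G) (n : ℕ) :
    leftConvAux μ (n + 1)
      = Measure.map (fun q : G × G => q.1 * q.2) (μ.prod (leftConvAux μ n)) := rfl
end Grp

section Grp
variable {G : Type*} [Group G] [TopologicalSpace G] [IsTopologicalGroup G]
    [LocallyCompactSpace G] [MeasurableSpace G] [BorelSpace G] [SecondCountableTopology G]

private lemma aux_prop (lam : Measure G) [lam.IsMulLeftInvariant]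
    (μ ρ : Measure G) [IsFiniteMeasure μ] [SFinite ρ] {U : Set G} (hU : IsOpen U)
    {c : ℝ≥0∞} (hc : 0 < c) (hcf : c ≠ ∞)
    (hgood : ∀ A : Set G, MeasurableSet A → A ⊆ U → c * lam A ≤ ρ A)
    {s y : G} (hy : y ∈ U) (hμpos : ∀ O : Set G, IsOpen O → s ∈ O → 0 < μ O) :
    ∃ U' : Set G, IsOpen U' ∧ s * y ∈ U' ∧ ∃ c' : ℝ≥0∞, 0 < c' ∧ c' ≠ ∞ ∧
      ∀ A : Set G, MeasurableSet A → A ⊆ U' →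
        c' * lam A ≤ (Measure.map (fun q : G × G => q.1 * q.2) (μ.prod ρ)) A := by
  have hcont : Continuous fun q : G × G => q.1⁻¹ * q.2 :=
    (continuous_fst.inv).mul continuous_snd
  have hopen : IsOpen ((fun q : G × G => q.1⁻¹ * q.2) ⁻¹' U) := hU.preimage hcont
  have hmem : (s, s * y) ∈ (fun q : G × G => q.1⁻¹ * q.2) ⁻¹' U := by
    simpa [inv_mul_cancel_left] using hy
  obtain ⟨O₁, U', hO₁o, hU'o, hsO₁, hsyU', hprod⟩ :=
    isOpen_prod_iff.1 hopen s (s * y) hmem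
  refine ⟨U', hU'o, hsyU', c * μ O₁, ?_, ?_, ?_⟩
  · exact ENNReal.mul_pos hc.ne' (hμpos O₁ hO₁o hsO₁).ne'
  · exact ENNReal.mul_ne_top hcf (measure_ne_top μ _)
  · intro A hA hAU'
    rw [aux_conv_apply μ ρ hA]
    have hkey : ∀ g : G, O₁.indicator (fun _ => c * lam A) g ≤ ρ ((fun h => g * h) ⁻¹' A) := by
      intro g
      by_cases hg : g ∈ O₁
      · rw [Set.indicator_of_mem hg]
        have hsub : (fun h => g * h) ⁻¹' A ⊆ U := by
          intro a ha
          have : (g, g * a) ∈ O₁ ×ˢ U' := ⟨hg, hAU' ha⟩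
          have := hprod this
          simpa [inv_mul_cancel_left] using this
        have hAm : MeasurableSet ((fun h => g * h) ⁻¹' A) :=
          hA.preimage (measurable_const_mul g)
        have := hgood _ hAm hsub
        rwa [measure_preimage_mul lam g A] at this
      · simp [Set.indicator_of_notMem hg]
    calc c * μ O₁ * lam A = c * lam A * μ O₁ := by ring
      _ = ∫⁻ g, O₁.indicator (fun _ => c * lam A) g ∂μ := by
          rw [lintegral_indicator_const hO₁o.measurableSet]
      _ ≤ ∫⁻ g, ρ ((fun h => g * h) ⁻¹' A) ∂μ := lintegral_mono hkey
end Grp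

section Grp
variable {G : Type*} [Group G] [TopologicalSpace G] [IsTopologicalGroup G]
    [LocallyCompactSpace G] [MeasurableSpace G] [BorelSpace G] [SecondCountableTopology G]

private lemma aux_ind_one_mul (s : Set G) (f : G → ℝ≥0∞) (g : G) :
    s.indicator (fun _ => (1 : ℝ≥0∞)) g * f g = s.indicator f g := by
  by_cases h : g ∈ s <;> simp [Set.indicator_apply, h]

private lemma aux_inter_indicator (lam : Measure G) {X Y : Set G} (hX : MeasurableSet X)
    (hY : MeasurableSet Y) :
    lam (X ∩ Y) = ∫⁻ h, X.indicator (fun _ => (1 : ℝ≥0∞)) h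
      * Y.indicator (fun _ => (1 : ℝ≥0∞)) h ∂lam := by
  have : ∀ h : G, X.indicator (fun _ => (1 : ℝ≥0∞)) h * Y.indicator (fun _ => (1 : ℝ≥0∞)) h
      = (X ∩ Y).indicator (fun _ => (1 : ℝ≥0∞)) h := by
    intro h
    by_cases h1 : h ∈ X <;> by_cases h2 : h ∈ Y <;>
      simp [Set.indicator_apply, h1, h2, Set.mem_inter_iff]
  simp_rw [this]
  rw [lintegral_indicator_const (hX.inter hY), one_mul]

private lemma aux_smul_indicator (Y : Set G) (u g : G) :
    (u • Y).indicator (fun _ => (1 : ℝ≥0∞)) g = Y.indicator (fun _ => (1 : ℝ≥0∞)) (u⁻¹ * g) := by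
  by_cases h : g ∈ u • Y
  · rw [Set.indicator_of_mem h, Set.indicator_of_mem]
    rwa [Set.mem_smul_set_iff_inv_smul_mem, smul_eq_mul] at h
  · rw [Set.indicator_of_notMem h, Set.indicator_of_notMem]
    intro hc
    exact h (by rwa [Set.mem_smul_set_iff_inv_smul_mem, smul_eq_mul])

private lemma aux_inv_indicator (Y : Set G) (g : G) :
    (Y⁻¹).indicator (fun _ => (1 : ℝ≥0∞)) g = Y.indicator (fun _ => (1 : ℝ≥0∞)) g⁻¹ := by
  by_cases h : g ∈ Y⁻¹
  · rw [Set.indicator_of_mem h, Set.indicator_of_mem (Set.mem_inv.1 h)]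
  · rw [Set.indicator_of_notMem h, Set.indicator_of_notMem]
    intro hc; exact h (Set.mem_inv.2 hc)

private lemma aux_smul_measurableSet {Y : Set G} (hY : MeasurableSet Y) (u : G) :
    MeasurableSet (u • Y) := by
  have : u • Y = (fun g => u⁻¹ * g) ⁻¹' Y := by
    ext g
    rw [Set.mem_smul_set_iff_inv_smul_mem, smul_eq_mul]
    rfl
  rw [this]
  exact hY.preimage (measurable_const_mul u⁻¹)

/-- `ψ u = lam (A₀ ∩ u • A₀⁻¹)` expressed as an integral. -/
private lemma aux_psi_eq (lam : Measure G) {A₀ : Set G} (hA₀ : MeasurableSet A₀) (u : G) :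
    lam (A₀ ∩ u • A₀⁻¹)
      = ∫⁻ g, A₀.indicator (fun _ => (1 : ℝ≥0∞)) g
          * A₀.indicator (fun _ => (1 : ℝ≥0∞)) (g⁻¹ * u) ∂lam := by
  rw [aux_inter_indicator lam hA₀ (aux_smul_measurableSet hA₀.inv u)]
  congr 1
  funext g
  congr 1
  rw [aux_smul_indicator, aux_inv_indicator]
  congr 1
  group

private lemma aux_psi_measurable (lam : Measure G) [SigmaFinite lam] {A₀ : Set G}
    (hA₀ : MeasurableSet A₀) :
    Measurable fun u : G => lam (A₀ ∩ u • A₀⁻¹) := by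
  have : (fun u : G => lam (A₀ ∩ u • A₀⁻¹))
      = fun u => ∫⁻ g, (fun q : G × G => A₀.indicator (fun _ => (1 : ℝ≥0∞)) q.2
          * A₀.indicator (fun _ => (1 : ℝ≥0∞)) (q.2⁻¹ * q.1)) (u, g) ∂lam := by
    funext u; exact aux_psi_eq lam hA₀ u
  rw [this]
  exact Measurable.lintegral_prod_right'
    (f := fun q : G × G => A₀.indicator (fun _ => (1 : ℝ≥0∞)) q.2
      * A₀.indicator (fun _ => (1 : ℝ≥0∞)) (q.2⁻¹ * q.1))
    (((measurable_const.indicator hA₀).comp measurable_snd).mul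
      ((measurable_const.indicator hA₀).comp (measurable_snd.inv.mul measurable_fst)))
end Grp

section Grp
variable {G : Type*} [Group G] [TopologicalSpace G] [IsTopologicalGroup G]
    [LocallyCompactSpace G] [MeasurableSpace G] [BorelSpace G] [SecondCountableTopology G]

private lemma aux_preimage_indicator (Y : Set G) (g h : G) :
    ((fun x => g * x) ⁻¹' Y).indicator (fun _ => (1 : ℝ≥0∞)) h
      = Y.indicator (fun _ => (1 : ℝ≥0∞)) (g * h) := by
  by_cases hm : g * h ∈ Y
  · rw [Set.indicator_of_mem (by exact hm), Set.indicator_of_mem hm]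
  · rw [Set.indicator_of_notMem (by exact hm), Set.indicator_of_notMem hm]

private lemma aux_tonelli (lam : Measure G) [lam.IsMulLeftInvariant] [SigmaFinite lam]
    {A A₀ : Set G} (hA : MeasurableSet A) (hA₀ : MeasurableSet A₀) :
    ∫⁻ g in A₀, lam ((fun h => g * h) ⁻¹' A ∩ A₀) ∂lam
      = ∫⁻ u in A, lam (A₀ ∩ u • A₀⁻¹) ∂lam := by
  have hIA : Measurable (A.indicator (fun _ => (1 : ℝ≥0∞))) := measurable_const.indicator hA
  have hIA₀ : Measurable (A₀.indicator (fun _ => (1 : ℝ≥0∞))) := measurable_const.indicator hA₀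
  have step1 : ∀ g : G, lam ((fun h => g * h) ⁻¹' A ∩ A₀)
      = ∫⁻ u, A.indicator (fun _ => (1 : ℝ≥0∞)) u
          * A₀.indicator (fun _ => (1 : ℝ≥0∞)) (g⁻¹ * u) ∂lam := by
    intro g
    rw [aux_inter_indicator lam (hA.preimage (measurable_const_mul g)) hA₀]
    have hφ : Measurable fun u => A.indicator (fun _ => (1 : ℝ≥0∞)) u
        * A₀.indicator (fun _ => (1 : ℝ≥0∞)) (g⁻¹ * u) :=
      hIA.mul (hIA₀.comp (measurable_const_mul g⁻¹))
    have hmp := (measurePreserving_mul_left lam g).lintegral_comp hφ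
    rw [← hmp]
    congr 1; funext h
    rw [aux_preimage_indicator]
    congr 2
    simp
  have hbig : Measurable fun q : G × G => A₀.indicator (fun _ => (1 : ℝ≥0∞)) q.1
      * (A.indicator (fun _ => (1 : ℝ≥0∞)) q.2
        * A₀.indicator (fun _ => (1 : ℝ≥0∞)) (q.1⁻¹ * q.2)) :=
    (hIA₀.comp measurable_fst).mul ((hIA.comp measurable_snd).mul
      (hIA₀.comp (measurable_fst.inv.mul measurable_snd)))
  have hinner : Measurable fun g : G => lam ((fun h => g * h) ⁻¹' A ∩ A₀) := by
    have : (fun g : G => lam ((fun h => g * h) ⁻¹' A ∩ A₀))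
        = fun g : G => ∫⁻ u, (fun q : G × G => A.indicator (fun _ => (1 : ℝ≥0∞)) q.2
            * A₀.indicator (fun _ => (1 : ℝ≥0∞)) (q.1⁻¹ * q.2)) (g, u) ∂lam := by
      funext g; exact step1 g
    rw [this]
    exact Measurable.lintegral_prod_right'
      (f := fun q : G × G => A.indicator (fun _ => (1 : ℝ≥0∞)) q.2
        * A₀.indicator (fun _ => (1 : ℝ≥0∞)) (q.1⁻¹ * q.2))
      ((hIA.comp measurable_snd).mul (hIA₀.comp (measurable_fst.inv.mul measurable_snd)))
  calc ∫⁻ g in A₀, lam ((fun h => g * h) ⁻¹' A ∩ A₀) ∂lam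
      = ∫⁻ g, A₀.indicator (fun _ => (1 : ℝ≥0∞)) g
          * lam ((fun h => g * h) ⁻¹' A ∩ A₀) ∂lam := by
        rw [← lintegral_indicator hA₀]
        congr 1; funext g
        exact (aux_ind_one_mul A₀ (fun g : G => lam ((fun h => g * h) ⁻¹' A ∩ A₀)) g).symm
    _ = ∫⁻ g, ∫⁻ u, A₀.indicator (fun _ => (1 : ℝ≥0∞)) g
          * (A.indicator (fun _ => (1 : ℝ≥0∞)) u
            * A₀.indicator (fun _ => (1 : ℝ≥0∞)) (g⁻¹ * u)) ∂lam ∂lam := by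
        congr 1; funext g
        have hm : Measurable fun u : G => A.indicator (fun _ => (1 : ℝ≥0∞)) u
            * A₀.indicator (fun _ => (1 : ℝ≥0∞)) (g⁻¹ * u) :=
          hIA.mul (hIA₀.comp (measurable_const_mul g⁻¹))
        rw [step1 g]
        exact (lintegral_const_mul _ hm).symm
    _ = ∫⁻ u, ∫⁻ g, A₀.indicator (fun _ => (1 : ℝ≥0∞)) g
          * (A.indicator (fun _ => (1 : ℝ≥0∞)) u
            * A₀.indicator (fun _ => (1 : ℝ≥0∞)) (g⁻¹ * u)) ∂lam ∂lam :=
        lintegral_lintegral_swap hbig.aemeasurable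
    _ = ∫⁻ u, A.indicator (fun _ => (1 : ℝ≥0∞)) u
          * (∫⁻ g, A₀.indicator (fun _ => (1 : ℝ≥0∞)) g
            * A₀.indicator (fun _ => (1 : ℝ≥0∞)) (g⁻¹ * u) ∂lam) ∂lam := by
        congr 1; funext u
        have hm : Measurable fun g : G => A₀.indicator (fun _ => (1 : ℝ≥0∞)) g
            * A₀.indicator (fun _ => (1 : ℝ≥0∞)) (g⁻¹ * u) :=
          hIA₀.mul (hIA₀.comp (measurable_inv.mul measurable_const))
        rw [← lintegral_const_mul _ hm]
        congr 1; funext g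
        ring
    _ = ∫⁻ u, A.indicator (fun _ => (1 : ℝ≥0∞)) u * lam (A₀ ∩ u • A₀⁻¹) ∂lam := by
        congr 1; funext u
        rw [← aux_psi_eq lam hA₀ u]
    _ = ∫⁻ u in A, lam (A₀ ∩ u • A₀⁻¹) ∂lam := by
        rw [← lintegral_indicator hA]
        congr 1; funext u
        exact aux_ind_one_mul A (fun u : G => lam (A₀ ∩ u • A₀⁻¹)) u

private lemma aux_psi_total (lam : Measure G) [lam.IsMulLeftInvariant] [SigmaFinite lam]
    {A₀ : Set G} (hA₀ : MeasurableSet A₀) :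
    ∫⁻ u, lam (A₀ ∩ u • A₀⁻¹) ∂lam = lam A₀ * lam A₀ := by
  have hIA₀ : Measurable (A₀.indicator (fun _ => (1 : ℝ≥0∞))) := measurable_const.indicator hA₀
  have hbig : Measurable fun q : G × G => A₀.indicator (fun _ => (1 : ℝ≥0∞)) q.2
      * A₀.indicator (fun _ => (1 : ℝ≥0∞)) (q.2⁻¹ * q.1) :=
    (hIA₀.comp measurable_snd).mul (hIA₀.comp (measurable_snd.inv.mul measurable_fst))
  calc ∫⁻ u, lam (A₀ ∩ u • A₀⁻¹) ∂lam
      = ∫⁻ u, ∫⁻ g, A₀.indicator (fun _ => (1 : ℝ≥0∞)) g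
          * A₀.indicator (fun _ => (1 : ℝ≥0∞)) (g⁻¹ * u) ∂lam ∂lam := by
        congr 1; funext u; exact aux_psi_eq lam hA₀ u
    _ = ∫⁻ g, ∫⁻ u, A₀.indicator (fun _ => (1 : ℝ≥0∞)) g
          * A₀.indicator (fun _ => (1 : ℝ≥0∞)) (g⁻¹ * u) ∂lam ∂lam :=
        lintegral_lintegral_swap hbig.aemeasurable
    _ = ∫⁻ g, A₀.indicator (fun _ => (1 : ℝ≥0∞)) g * lam A₀ ∂lam := by
        congr 1; funext g
        have hm : Measurable fun u : G => A₀.indicator (fun _ => (1 : ℝ≥0∞)) (g⁻¹ * u) :=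
          hIA₀.comp (measurable_const_mul g⁻¹)
        rw [lintegral_const_mul _ hm]
        congr 1
        exact ((measurePreserving_mul_left lam g⁻¹).lintegral_comp hIA₀).trans
          ((lintegral_indicator_const hA₀ 1).trans (one_mul _))
    _ = lam A₀ * lam A₀ := by
        rw [lintegral_mul_const _ hIA₀, lintegral_indicator_const hA₀, one_mul]
end Grp

section Grp
variable {G : Type*} [Group G] [TopologicalSpace G] [IsTopologicalGroup G]
    [LocallyCompactSpace G] [MeasurableSpace G] [BorelSpace G] [SecondCountableTopology G]

private lemma aux_seed (lam : Measure G) [lam.IsHaarMeasure] [lam.Regular] [SigmaFinite lam]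
    (μ : Measure G) [IsProbabilityMeasure μ] (hac : μ ≪ lam) :
    ∃ (U : Set G) (c : ℝ≥0∞), IsOpen U ∧ U.Nonempty ∧ 0 < c ∧ c ≠ ∞ ∧
      ∀ A : Set G, MeasurableSet A → A ⊆ U →
        c * lam A ≤ (Measure.map (fun q : G × G => q.1 * q.2) (μ.prod μ)) A := by
  classical
  set f := μ.rnDeriv lam with hfdef
  have hf : Measurable f := Measure.measurable_rnDeriv μ lam
  have htot : ∫⁻ x, f x ∂lam = 1 := by
    rw [Measure.lintegral_rnDeriv hac]; exact measure_univ
  -- find a level set of positive measure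
  set E : ℕ → Set G := fun n => {x | ((n + 1 : ℕ) : ℝ≥0∞)⁻¹ ≤ f x} with hEdef
  have hEm : ∀ n, MeasurableSet (E n) := fun n => measurableSet_le measurable_const hf
  have hcover : {x | f x ≠ 0} ⊆ ⋃ n, E n := by
    intro x hx
    obtain ⟨n, hn⟩ := ENNReal.exists_inv_nat_lt hx
    refine Set.mem_iUnion.2 ⟨n, ?_⟩
    have h1 : ((n + 1 : ℕ) : ℝ≥0∞)⁻¹ ≤ ((n : ℕ) : ℝ≥0∞)⁻¹ :=
      ENNReal.inv_le_inv' (by exact_mod_cast Nat.le_succ n)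
    exact le_trans h1 hn.le
  have hEpos : ∃ n, lam (E n) ≠ 0 := by
    by_contra hcon
    push_neg at hcon
    have h0 : lam {x | f x ≠ 0} = 0 :=
      measure_mono_null hcover (by simpa using measure_iUnion_null hcon)
    have : f =ᵐ[lam] 0 := by
      rw [Filter.EventuallyEq, ae_iff]
      simpa using h0
    rw [lintegral_congr_ae this] at htot
    simp at htot
  obtain ⟨k, hk⟩ := hEpos
  set η : ℝ≥0∞ := ((k + 1 : ℕ) : ℝ≥0∞)⁻¹ with hηdef
  have hη0 : η ≠ 0 := by
    simp [hηdef]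
  have hηtop : η ≠ ∞ := by
    simp [hηdef]
  -- intersect with a compact set
  have hcc : ∃ n, lam (E k ∩ compactCovering G n) ≠ 0 := by
    by_contra hcon
    push_neg at hcon
    have : lam (⋃ n, E k ∩ compactCovering G n) = 0 := by simpa using measure_iUnion_null hcon
    refine hk (measure_mono_null ?_ this)
    intro x hx
    obtain ⟨n, hn⟩ := Set.mem_iUnion.1 (by
      rw [iUnion_compactCovering] ; exact Set.mem_univ x :
        x ∈ ⋃ n, compactCovering G n)
    exact Set.mem_iUnion.2 ⟨n, hx, hn⟩
  obtain ⟨m, hm⟩ := hcc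
  set A₀ : Set G := E k ∩ closure (compactCovering G m) with hA₀def
  have hA₀m : MeasurableSet A₀ := (hEm k).inter isClosed_closure.measurableSet
  have hA₀0 : lam A₀ ≠ 0 := by
    intro h0
    exact hm (measure_mono_null (Set.inter_subset_inter_right _ subset_closure) h0)
  have hA₀cpt : IsCompact (closure (compactCovering G m)) :=
    (isCompact_compactCovering G m).closure
  have hA₀top : lam A₀ ≠ ∞ :=
    ne_top_of_le_ne_top hA₀cpt.measure_lt_top.ne (measure_mono Set.inter_subset_right)
  have hfA₀ : ∀ x ∈ A₀, η ≤ f x := fun x hx => hx.1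
  -- μ dominates η · lam on subsets of A₀
  have hmuX : ∀ X : Set G, MeasurableSet X → η * lam (X ∩ A₀) ≤ μ X := by
    intro X hX
    have h1 : lam.withDensity f ≤ μ := Measure.withDensity_rnDeriv_le μ lam
    have h2 : (lam.withDensity f) X = ∫⁻ x in X, f x ∂lam := withDensity_apply f hX
    have h3 : η * lam (X ∩ A₀) ≤ ∫⁻ x in X ∩ A₀, f x ∂lam := by
      have := setLIntegral_mono (μ := lam) (s := X ∩ A₀) hf (fun x hx => hfA₀ x hx.2)
      rwa [setLIntegral_const] at this
    have h4 : ∫⁻ x in X ∩ A₀, f x ∂lam ≤ ∫⁻ x in X, f x ∂lam :=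
      lintegral_mono_set Set.inter_subset_left
    calc η * lam (X ∩ A₀) ≤ ∫⁻ x in X, f x ∂lam := h3.trans h4
      _ = (lam.withDensity f) X := h2.symm
      _ ≤ μ X := h1 X
  -- the auto-correlation function ψ
  set ψ : G → ℝ≥0∞ := fun u => lam (A₀ ∩ u • A₀⁻¹) with hψdef
  have hψm : Measurable ψ := aux_psi_measurable lam hA₀m
  have hψtot : ∫⁻ u, ψ u ∂lam = lam A₀ * lam A₀ := aux_psi_total lam hA₀m
  have hψex : ∃ u₀, ψ u₀ ≠ 0 := by
    by_contra hcon
    push_neg at hcon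
    have : ∫⁻ u, ψ u ∂lam = 0 := by
      simp only [hcon]; exact lintegral_zero
    rw [hψtot] at this
    exact hA₀0 ((mul_eq_zero.1 this).elim id id)
  obtain ⟨u₀, hu₀⟩ := hψex
  have hψfin : ψ u₀ ≠ ∞ :=
    ne_top_of_le_ne_top hA₀top (measure_mono Set.inter_subset_left)
  -- translation continuity
  set B : Set G := A₀⁻¹ with hBdef
  have hBm : MeasurableSet B := hA₀m.inv
  have hBtop : lam B ≠ ∞ := by
    have hsub : B ⊆ (closure (compactCovering G m))⁻¹ :=
      Set.inv_subset_inv.2 Set.inter_subset_right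
    exact ne_top_of_le_ne_top hA₀cpt.inv.measure_lt_top.ne (measure_mono hsub)
  obtain ⟨V, hVo, hV1, hVbd⟩ := aux_T lam hBm hBtop (ε := ψ u₀ / 2)
    (ENNReal.half_pos hu₀)
  have hlow : ∀ u ∈ u₀ • V, ψ u₀ / 2 ≤ ψ u := by
    rintro u ⟨v, hvV, rfl⟩
    have hvB : lam (B \ v • B) ≤ ψ u₀ / 2 := hVbd v hvV
    have hsub : A₀ ∩ u₀ • B ⊆ (A₀ ∩ (u₀ • v) • B) ∪ u₀ • (B \ v • B) := by
      intro x hx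
      by_cases hxm : x ∈ (u₀ • v) • B
      · exact Or.inl ⟨hx.1, hxm⟩
      · refine Or.inr ?_
        rw [smul_set_sdiff]
        refine ⟨hx.2, ?_⟩
        rwa [← mul_smul]
    have hstep : ψ u₀ ≤ ψ (u₀ • v) + ψ u₀ / 2 := by
      calc ψ u₀ ≤ lam ((A₀ ∩ (u₀ • v) • B) ∪ u₀ • (B \ v • B)) := measure_mono hsub
        _ ≤ lam (A₀ ∩ (u₀ • v) • B) + lam (u₀ • (B \ v • B)) := measure_union_le _ _
        _ = ψ (u₀ • v) + lam (B \ v • B) := by rw [measure_smul]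
        _ ≤ ψ (u₀ • v) + ψ u₀ / 2 := add_le_add_right hvB _
    have h2 : ψ u₀ / 2 + ψ u₀ / 2 ≤ ψ (u₀ • v) + ψ u₀ / 2 := by
      rwa [ENNReal.add_halves]
    exact (ENNReal.add_le_add_iff_right
      (by exact ENNReal.div_lt_top hψfin (by norm_num) |>.ne)).1 h2
  -- the open set and constant
  refine ⟨u₀ • V, ψ u₀ / 2 * (η * η), hVo.smul u₀, ⟨u₀ • 1, smul_mem_smul_set hV1⟩, ?_, ?_, ?_⟩
  · exact ENNReal.mul_pos (ENNReal.half_pos hu₀).ne' (ENNReal.mul_pos hη0 hη0).ne'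
  · exact ENNReal.mul_ne_top (ENNReal.div_lt_top hψfin (by norm_num)).ne
      (ENNReal.mul_ne_top hηtop hηtop)
  -- the main estimate
  intro A hA hAU
  rw [aux_conv_apply μ μ hA]
  set Gfun : G → ℝ≥0∞ := fun g => lam ((fun h => g * h) ⁻¹' A ∩ A₀) with hGdef
  have hGm : Measurable Gfun := by
    have hIA : Measurable (A.indicator (fun _ => (1 : ℝ≥0∞))) := measurable_const.indicator hA
    have hIA₀ : Measurable (A₀.indicator (fun _ => (1 : ℝ≥0∞))) :=
      measurable_const.indicator hA₀m
    have heq : Gfun = fun g : G => ∫⁻ h, (fun q : G × G =>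
        A.indicator (fun _ => (1 : ℝ≥0∞)) (q.1 * q.2)
          * A₀.indicator (fun _ => (1 : ℝ≥0∞)) q.2) (g, h) ∂lam := by
      funext g
      rw [hGdef]
      simp only
      rw [aux_inter_indicator lam (hA.preimage (measurable_const_mul g)) hA₀m]
      simp only [aux_preimage_indicator]
    rw [heq]
    exact Measurable.lintegral_prod_right'
      (f := fun q : G × G => A.indicator (fun _ => (1 : ℝ≥0∞)) (q.1 * q.2)
        * A₀.indicator (fun _ => (1 : ℝ≥0∞)) q.2)
      ((hIA.comp measurable_mul).mul (hIA₀.comp measurable_snd))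
  have hc2 : ∀ g : G, η * Gfun g ≤ μ ((fun h => g * h) ⁻¹' A) := by
    intro g
    exact hmuX _ (hA.preimage (measurable_const_mul g))
  have hchain1 : η * ∫⁻ g, Gfun g ∂μ ≤ ∫⁻ g, μ ((fun h => g * h) ⁻¹' A) ∂μ := by
    rw [← lintegral_const_mul _ hGm]
    exact lintegral_mono hc2
  have hchain2 : η * ∫⁻ g in A₀, Gfun g ∂lam ≤ ∫⁻ g, Gfun g ∂μ := by
    have h1 : lam.withDensity f ≤ μ := Measure.withDensity_rnDeriv_le μ lam
    have h2 : ∫⁻ g, Gfun g ∂(lam.withDensity f) ≤ ∫⁻ g, Gfun g ∂μ :=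
      lintegral_mono' h1 le_rfl
    have h3 : ∫⁻ g, Gfun g ∂(lam.withDensity f) = ∫⁻ g, f g * Gfun g ∂lam := by
      rw [lintegral_withDensity_eq_lintegral_mul lam hf hGm]; rfl
    have h4 : ∫⁻ g in A₀, η * Gfun g ∂lam ≤ ∫⁻ g in A₀, f g * Gfun g ∂lam :=
      setLIntegral_mono (hf.mul hGm) (fun g hg => mul_le_mul_left (hfA₀ g hg) _)
    have h5 : ∫⁻ g in A₀, f g * Gfun g ∂lam ≤ ∫⁻ g, f g * Gfun g ∂lam :=
      setLIntegral_le_lintegral _ _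
    calc η * ∫⁻ g in A₀, Gfun g ∂lam = ∫⁻ g in A₀, η * Gfun g ∂lam := by
          rw [lintegral_const_mul _ hGm]
      _ ≤ ∫⁻ g, f g * Gfun g ∂lam := h4.trans h5
      _ = ∫⁻ g, Gfun g ∂(lam.withDensity f) := h3.symm
      _ ≤ ∫⁻ g, Gfun g ∂μ := h2
  have hchain3 : ψ u₀ / 2 * lam A ≤ ∫⁻ g in A₀, Gfun g ∂lam := by
    have h1 : ∫⁻ g in A₀, Gfun g ∂lam = ∫⁻ u in A, ψ u ∂lam := aux_tonelli lam hA hA₀m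
    have h2 : ∫⁻ u in A, (ψ u₀ / 2) ∂lam ≤ ∫⁻ u in A, ψ u ∂lam :=
      setLIntegral_mono hψm (fun u hu => hlow u (hAU hu))
    rw [h1]
    calc ψ u₀ / 2 * lam A = ∫⁻ _ in A, (ψ u₀ / 2) ∂lam := by rw [setLIntegral_const]
      _ ≤ ∫⁻ u in A, ψ u ∂lam := h2
  calc ψ u₀ / 2 * (η * η) * lam A = η * (η * (ψ u₀ / 2 * lam A)) := by ring
    _ ≤ η * (η * ∫⁻ g in A₀, Gfun g ∂lam) :=
        mul_le_mul_right (mul_le_mul_right hchain3 η) η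
    _ ≤ η * ∫⁻ g, Gfun g ∂μ := mul_le_mul_right hchain2 η
    _ ≤ ∫⁻ g, μ ((fun h => g * h) ⁻¹' A) ∂μ := hchain1
end Grp


/- STATEMENT 7: for a cohomologically adapted measure `μ` and a strongly continuous
isometric representation on a separable Banach space, the norms `sup_{g ∈ S} ‖b(g)‖`
and `‖b‖_{L^p(μ)}` on `Z¹(G,π)` are equivalent. -/
theorem cocycle_norms_equivalent
    {G : Type*} [Group G] [TopologicalSpace G] [IsTopologicalGroup G]
    [LocallyCompactSpace G] [SecondCountableTopology G]
    [MeasurableSpace G] [BorelSpace G]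
    (S : Set G) (hScpt : IsCompact S) (hSsymm : S⁻¹ = S)
    (hSgen : ∀ g : G, ∃ n : ℕ, g ∈ S ^ n)
    (μ : MeasureTheory.Measure G) (hμ : CohomologicallyAdapted S μ)
    (p : ℝ) (hp : 1 ≤ p)
    {E : Type*} [NormedAddCommGroup E] [NormedSpace ℝ E] [CompleteSpace E]
    [TopologicalSpace.SeparableSpace E]
    (π : G →* (E ≃ₗᵢ[ℝ] E)) (hπ : ∀ x : E, Continuous fun g : G => π g x) :
    ∃ C : ℝ, 1 ≤ C ∧ ∀ b : G → E, Continuous b →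
      (∀ g h : G, b (g * h) = b g + π g (b h)) →
      C⁻¹ * sSup ((fun g => ‖b g‖) '' S) ≤ (∫ g, ‖b g‖ ^ p ∂μ) ^ (1 / p) ∧
        (∫ g, ‖b g‖ ^ p ∂μ) ^ (1 / p) ≤ C * sSup ((fun g => ‖b g‖) '' S) := by
  classical
  haveI hPμ : IsProbabilityMeasure μ := hμ.isProb
  have hp0 : 0 < p := lt_of_lt_of_le one_pos hp
  have hp0' : 0 ≤ p := hp0.le
  have hp0ne : p ≠ 0 := hp0.ne'
  set lam : Measure G := Measure.haar with hlam
  haveI hlamHaar : lam.IsHaarMeasure := by rw [hlam]; infer_instance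
  haveI hlamReg : lam.Regular := by rw [hlam]; infer_instance
  haveI hlamSF : SigmaFinite lam := by rw [hlam]; infer_instance
  have hac : μ ≪ lam := by rw [hlam]; exact hμ.absCont
  -- seed
  obtain ⟨U₀, c₀, hU₀o, hU₀ne, hc₀, hc₀f, hseed⟩ := aux_seed lam μ hac
  obtain ⟨x₀, hx₀⟩ := hU₀ne
  obtain ⟨W, hWc, hx₀W, hWU₀⟩ := exists_compact_subset hU₀o hx₀
  set W₀ : Set G := interior W with hW₀def
  have hW₀o : IsOpen W₀ := isOpen_interior
  have hβ0 : lam W₀ ≠ 0 := (hW₀o.measure_pos lam ⟨x₀, hx₀W⟩).ne'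
  have hβtop : lam W₀ ≠ ∞ :=
    ne_top_of_le_ne_top hWc.measure_lt_top.ne (measure_mono interior_subset)
  set K : Set G := S * W ∪ W with hKdef
  have hKcpt : IsCompact K := (hScpt.mul hWc).union hWc
  -- good points cover K
  have hgoodpt : ∀ z ∈ K, ∃ (U' : Set G) (n : ℕ) (c : ℝ≥0∞), IsOpen U' ∧ z ∈ U' ∧
      0 < c ∧ c ≠ ∞ ∧ ∀ A : Set G, MeasurableSet A → A ⊆ U' →
        c * lam A ≤ leftConvAux μ n A := by
    intro z hz
    rcases hz with hz | hz
    · rw [Set.mem_mul] at hz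
      obtain ⟨s, hs, w, hw, rfl⟩ := hz
      haveI := aux_leftConvAux_prob μ 1
      have hseed1 : ∀ A : Set G, MeasurableSet A → A ⊆ U₀ →
          c₀ * lam A ≤ leftConvAux μ 1 A := by
        intro A hA hAU
        rw [aux_leftConvAux_succ, aux_leftConvAux_zero]
        exact hseed A hA hAU
      obtain ⟨U', hU'o, hzU', c', hc', hc'f, hgood'⟩ :=
        aux_prop lam μ (leftConvAux μ 1) hU₀o hc₀ hc₀f hseed1 (hWU₀ hw)
          (fun O hOo hsO => hμ.suppContains s hs O hOo hsO)
      refine ⟨U', 2, c', hU'o, hzU', hc', hc'f, ?_⟩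
      intro A hA hAU
      rw [aux_leftConvAux_succ]
      exact hgood' A hA hAU
    · exact ⟨U₀, 1, c₀, hU₀o, hWU₀ hz, hc₀, hc₀f, fun A hA hAU => by
        rw [aux_leftConvAux_succ, aux_leftConvAux_zero]; exact hseed A hA hAU⟩
  choose Uz nz cz hUzo hzUz hcz0 hczf hgoodz using hgoodpt
  obtain ⟨t, htcov⟩ := hKcpt.elim_nhds_subcover' (fun z hz => Uz z hz)
    (fun z hz => (hUzo z hz).mem_nhds (hzUz z hz))
  have hres : lam.restrict K ≤ ∑ z ∈ t, lam.restrict (Uz z z.2) := by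
    refine Measure.le_iff.2 fun A hA => ?_
    rw [Measure.restrict_apply hA]
    have h1 : A ∩ K ⊆ ⋃ z ∈ t, A ∩ Uz z z.2 := by
      intro x hx
      obtain ⟨z, hzt, hxz⟩ := Set.mem_iUnion₂.1 (htcov hx.2)
      exact Set.mem_iUnion₂.2 ⟨z, hzt, hx.1, hxz⟩
    calc lam (A ∩ K) ≤ ∑ z ∈ t, lam (A ∩ Uz z z.2) :=
          (measure_mono h1).trans (measure_biUnion_finset_le t _)
      _ = (∑ z ∈ t, lam.restrict (Uz z z.2)) A := by
          rw [Measure.finset_sum_apply]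
          exact Finset.sum_congr rfl fun z _ => (Measure.restrict_apply hA).symm
  -- constants
  set κ : ℝ≥0∞ := ENNReal.ofReal (2 ^ p) with hκdef
  have hκtop : κ ≠ ∞ := ENNReal.ofReal_ne_top
  set C₃ : ℝ≥0∞ := ∑ z ∈ t, (cz z z.2)⁻¹ * aux_an κ (nz z z.2) with hC₃def
  have hC₃top : C₃ ≠ ∞ := by
    rw [hC₃def]
    refine (ENNReal.sum_lt_top.2 fun z _ => ?_).ne
    exact ENNReal.mul_lt_top (ENNReal.inv_lt_top.2 (hcz0 z z.2))
      (aux_an_ne_top hκtop _).lt_top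
  set Denn : ℝ≥0∞ := (lam W₀)⁻¹ * (κ * (2 * C₃)) with hDenndef
  have hDenn_top : Denn ≠ ∞ := by
    rw [hDenndef]
    exact ENNReal.mul_ne_top (ENNReal.inv_ne_top.2 hβ0)
      (ENNReal.mul_ne_top hκtop (ENNReal.mul_ne_top (by norm_num) hC₃top))
  set Dr : ℝ := Denn.toReal with hDrdef
  have hDr0 : 0 ≤ Dr := ENNReal.toReal_nonneg
  set Kp : ℝ := ∫ g, (wordLength S g : ℝ) ^ p ∂μ with hKpdef
  have hKp0 : 0 ≤ Kp :=
    integral_nonneg fun g => Real.rpow_nonneg (Nat.cast_nonneg _) p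
  set C : ℝ := max 1 (max (Kp ^ (1 / p)) (Dr ^ (1 / p))) with hCdef
  have hC1 : (1 : ℝ) ≤ C := le_max_left _ _
  have hC0 : (0 : ℝ) < C := lt_of_lt_of_le one_pos hC1
  refine ⟨C, hC1, ?_⟩
  intro b hb hcoc
  -- cocycle basics
  have hb1 : b 1 = 0 := by
    have h := hcoc 1 1
    rw [one_mul, map_one] at h
    simpa using (left_eq_add.1 h)
  have hnorm_pi : ∀ (g : G) (x : E), ‖π g x‖ = ‖x‖ := fun g x => (π g).norm_map x
  have hkey2 : ∀ g h : G, ‖b (g * h)‖ ≤ ‖b g‖ + ‖b h‖ := by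
    intro g h
    rw [hcoc g h]
    exact (norm_add_le _ _).trans (by rw [hnorm_pi])
  have hkey1 : ∀ g h : G, ‖b g‖ ≤ ‖b (g * h)‖ + ‖b h‖ := by
    intro g h
    have h1 : b g = b (g * h) - π g (b h) := by rw [hcoc g h]; abel
    calc ‖b g‖ = ‖b (g * h) - π g (b h)‖ := by rw [← h1]
      _ ≤ ‖b (g * h)‖ + ‖π g (b h)‖ := norm_sub_le _ _
      _ = ‖b (g * h)‖ + ‖b h‖ := by rw [hnorm_pi]
  set M : ℝ := sSup ((fun g => ‖b g‖) '' S) with hMdef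
  have hMbdd : BddAbove ((fun g => ‖b g‖) '' S) :=
    hScpt.bddAbove_image (continuous_norm.comp hb).continuousOn
  have hM : ∀ g ∈ S, ‖b g‖ ≤ M := fun g hg => le_csSup hMbdd ⟨g, hg, rfl⟩
  have hM0 : 0 ≤ M := by
    rcases S.eq_empty_or_nonempty with hS | ⟨s, hs⟩
    · rw [hMdef, hS]; simp [Real.sSup_empty]
    · exact (norm_nonneg _).trans (hM s hs)
  -- word-length bound
  have hword : ∀ (n : ℕ) (g : G), g ∈ S ^ n → ‖b g‖ ≤ n * M := by
    intro n
    induction n with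
    | zero =>
      intro g hg
      rw [pow_zero, Set.mem_one] at hg
      subst hg
      simp [hb1]
    | succ n ih =>
      intro g hg
      rw [pow_succ, Set.mem_mul] at hg
      obtain ⟨x, hx, y, hy, rfl⟩ := hg
      calc ‖b (x * y)‖ ≤ ‖b x‖ + ‖b y‖ := hkey2 x y
        _ ≤ n * M + M := add_le_add (ih x hx) (hM y hy)
        _ = (n + 1 : ℕ) * M := by push_cast; ring
  have hwl : ∀ g : G, ‖b g‖ ≤ (wordLength S g : ℝ) * M := by
    intro g
    have hmem : g ∈ S ^ wordLength S g := Nat.sInf_mem (hSgen g)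
    exact hword _ g hmem
  -- integrability and the upper bound
  have hmom := hμ.finiteMoments p hp
  have hbp_cont : Continuous fun g => ‖b g‖ ^ p :=
    (continuous_norm.comp hb).rpow_const fun x => Or.inr hp0'
  have hptbd : ∀ g : G, ‖b g‖ ^ p ≤ M ^ p * (wordLength S g : ℝ) ^ p := by
    intro g
    calc ‖b g‖ ^ p ≤ ((wordLength S g : ℝ) * M) ^ p :=
          Real.rpow_le_rpow (norm_nonneg _) (hwl g) hp0'
      _ = M ^ p * (wordLength S g : ℝ) ^ p := by
          rw [Real.mul_rpow (Nat.cast_nonneg _) hM0]; ring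
  have hintb : Integrable (fun g => ‖b g‖ ^ p) μ := by
    refine (hmom.const_mul (M ^ p)).mono' hbp_cont.aestronglyMeasurable ?_
    refine Eventually.of_forall fun g => ?_
    rw [Real.norm_of_nonneg (Real.rpow_nonneg (norm_nonneg _) p)]
    exact hptbd g
  set Ip : ℝ := ∫ g, ‖b g‖ ^ p ∂μ with hIpdef
  have hIp0 : 0 ≤ Ip :=
    integral_nonneg fun g => Real.rpow_nonneg (norm_nonneg _) p
  have hIple : Ip ≤ M ^ p * Kp := by
    calc Ip ≤ ∫ g, M ^ p * (wordLength S g : ℝ) ^ p ∂μ :=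
          integral_mono hintb (hmom.const_mul _) hptbd
      _ = M ^ p * Kp := integral_const_mul _ _
  have hgoal2 : Ip ^ (1 / p) ≤ C * M := by
    have h1 : Ip ^ (1 / p) ≤ (M ^ p * Kp) ^ (1 / p) :=
      Real.rpow_le_rpow hIp0 hIple (by positivity)
    have h2 : (M ^ p * Kp) ^ (1 / p) = M * Kp ^ (1 / p) := by
      rw [Real.mul_rpow (Real.rpow_nonneg hM0 p) hKp0, ← Real.rpow_mul hM0,
        mul_one_div_cancel hp0ne, Real.rpow_one]
    have h3 : Kp ^ (1 / p) ≤ C := le_trans (le_max_left _ _) (le_max_right _ _)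
    calc Ip ^ (1 / p) ≤ M * Kp ^ (1 / p) := h2 ▸ h1
      _ ≤ M * C := mul_le_mul_of_nonneg_left h3 hM0
      _ = C * M := mul_comm _ _
  -- the ENNReal-valued function F
  set F : G → ℝ≥0∞ := fun g => ENNReal.ofReal (‖b g‖ ^ p) with hFdef
  have hFm : Measurable F := ENNReal.measurable_ofReal.comp hbp_cont.measurable
  set Λ : ℝ≥0∞ := ∫⁻ g, F g ∂μ with hΛdef
  have hLam : Λ = ENNReal.ofReal Ip := by
    rw [hΛdef, hIpdef]
    exact (ofReal_integral_eq_lintegral_ofReal hintb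
      (Eventually.of_forall fun g => Real.rpow_nonneg (norm_nonneg _) p)).symm
  have hΛtop : Λ ≠ ∞ := by rw [hLam]; exact ENNReal.ofReal_ne_top
  have hFineq : ∀ x y : ℝ, 0 ≤ x → 0 ≤ y →
      ENNReal.ofReal ((x + y) ^ p) ≤ κ * (ENNReal.ofReal (x ^ p) + ENNReal.ofReal (y ^ p)) := by
    intro x y hx hy
    calc ENNReal.ofReal ((x + y) ^ p) ≤ ENNReal.ofReal (2 ^ p * (x ^ p + y ^ p)) :=
          ENNReal.ofReal_le_ofReal (aux_rpow_add_le hp hx hy)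
      _ = κ * (ENNReal.ofReal (x ^ p) + ENNReal.ofReal (y ^ p)) := by
          rw [ENNReal.ofReal_mul (Real.rpow_nonneg (by norm_num) p),
            ENNReal.ofReal_add (Real.rpow_nonneg hx p) (Real.rpow_nonneg hy p)]
  have hFsub2 : ∀ g h : G, F (g * h) ≤ κ * (F g + F h) := by
    intro g h
    calc F (g * h) ≤ ENNReal.ofReal ((‖b g‖ + ‖b h‖) ^ p) :=
          ENNReal.ofReal_le_ofReal
            (Real.rpow_le_rpow (norm_nonneg _) (hkey2 g h) hp0')
      _ ≤ κ * (F g + F h) := hFineq _ _ (norm_nonneg _) (norm_nonneg _)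
  have hFsub1 : ∀ g h : G, F g ≤ κ * (F (g * h) + F h) := by
    intro g h
    calc F g ≤ ENNReal.ofReal ((‖b (g * h)‖ + ‖b h‖) ^ p) :=
          ENNReal.ofReal_le_ofReal
            (Real.rpow_le_rpow (norm_nonneg _) (hkey1 g h) hp0')
      _ ≤ κ * (F (g * h) + F h) := hFineq _ _ (norm_nonneg _) (norm_nonneg _)
  have hFn : ∀ n, ∫⁻ x, F x ∂(leftConvAux μ n) ≤ aux_an κ n * Λ := fun n =>
    aux_leftConvAux_bound μ hFm hFsub2 n
  -- integral of F over K
  have hUzint : ∀ z : K, z.1 ∈ K → ∀ hz : z.1 ∈ K,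
      ∫⁻ x in Uz z.1 hz, F x ∂lam ≤ (cz z.1 hz)⁻¹ * (aux_an κ (nz z.1 hz) * Λ) := by
    intro z _ hz
    have hle : (cz z.1 hz) • lam.restrict (Uz z.1 hz) ≤ leftConvAux μ (nz z.1 hz) := by
      refine Measure.le_iff.2 fun A hA => ?_
      rw [Measure.smul_apply, smul_eq_mul, Measure.restrict_apply hA]
      calc cz z.1 hz * lam (A ∩ Uz z.1 hz)
          ≤ leftConvAux μ (nz z.1 hz) (A ∩ Uz z.1 hz) :=
            hgoodz z.1 hz (A ∩ Uz z.1 hz)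
              (hA.inter (hUzo z.1 hz).measurableSet) Set.inter_subset_right
        _ ≤ leftConvAux μ (nz z.1 hz) A := measure_mono Set.inter_subset_left
    have h1 : cz z.1 hz * ∫⁻ x in Uz z.1 hz, F x ∂lam ≤ aux_an κ (nz z.1 hz) * Λ := by
      calc cz z.1 hz * ∫⁻ x in Uz z.1 hz, F x ∂lam
          = ∫⁻ x, F x ∂((cz z.1 hz) • lam.restrict (Uz z.1 hz)) :=
            by rw [lintegral_smul_measure, smul_eq_mul]
        _ ≤ ∫⁻ x, F x ∂(leftConvAux μ (nz z.1 hz)) := lintegral_mono' hle le_rfl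
        _ ≤ aux_an κ (nz z.1 hz) * Λ := hFn _
    calc ∫⁻ x in Uz z.1 hz, F x ∂lam
        = (cz z.1 hz)⁻¹ * (cz z.1 hz * ∫⁻ x in Uz z.1 hz, F x ∂lam) := by
          rw [← mul_assoc, ENNReal.inv_mul_cancel (hcz0 z.1 hz).ne' (hczf z.1 hz), one_mul]
      _ ≤ (cz z.1 hz)⁻¹ * (aux_an κ (nz z.1 hz) * Λ) := mul_le_mul_right h1 _
  have hKint : ∫⁻ x in K, F x ∂lam ≤ C₃ * Λ := by
    calc ∫⁻ x in K, F x ∂lam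
        ≤ ∫⁻ x, F x ∂(∑ z ∈ t, lam.restrict (Uz z z.2)) := lintegral_mono' hres le_rfl
      _ = ∑ z ∈ t, ∫⁻ x in Uz z z.2, F x ∂lam := lintegral_finset_sum_measure t F _
      _ ≤ ∑ z ∈ t, (cz z z.2)⁻¹ * (aux_an κ (nz z z.2) * Λ) :=
          Finset.sum_le_sum fun z _ => hUzint z z.2 z.2
      _ = C₃ * Λ := by
          rw [hC₃def, Finset.sum_mul]
          exact Finset.sum_congr rfl fun z _ => by ring
  -- pointwise bound on S
  have hSbound : ∀ g ∈ S, F g ≤ Denn * Λ := by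
    intro g hg
    have himgK : (fun h => g * h) '' W₀ ⊆ K := by
      rintro x ⟨w, hw, rfl⟩
      exact Or.inl (Set.mul_mem_mul hg (interior_subset hw))
    have hW₀K : W₀ ⊆ K := fun x hx => Or.inr (interior_subset hx)
    have h3 : F g * lam W₀ ≤ κ * (2 * (C₃ * Λ)) := by
      calc F g * lam W₀ = ∫⁻ h in W₀, F g ∂lam := by rw [setLIntegral_const]
        _ ≤ ∫⁻ h in W₀, κ * (F (g * h) + F h) ∂lam :=
            lintegral_mono fun h => hFsub1 g h
        _ = κ * ((∫⁻ h in W₀, F (g * h) ∂lam) + ∫⁻ h in W₀, F h ∂lam) := by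
            have hm : Measurable fun h : G => F (g * h) := hFm.comp (measurable_const_mul g)
            rw [lintegral_const_mul _ (f := fun h => F (g * h) + F h) (hm.add hFm), lintegral_add_left hm]
        _ = κ * ((∫⁻ u in (fun h => g * h) '' W₀, F u ∂lam) + ∫⁻ h in W₀, F h ∂lam) := by
            rw [aux_setLIntegral_mul_left lam hFm g hW₀o.measurableSet]
        _ ≤ κ * ((∫⁻ u in K, F u ∂lam) + ∫⁻ u in K, F u ∂lam) :=
            mul_le_mul_right
              (add_le_add (lintegral_mono_set himgK) (lintegral_mono_set hW₀K)) κ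
        _ = κ * (2 * ∫⁻ u in K, F u ∂lam) := by rw [two_mul]
        _ ≤ κ * (2 * (C₃ * Λ)) :=
            mul_le_mul_right (mul_le_mul_right hKint 2) κ
    have h4 : F g = (lam W₀)⁻¹ * (F g * lam W₀) := by
      rw [mul_comm (F g), ← mul_assoc, ENNReal.inv_mul_cancel hβ0 hβtop, one_mul]
    calc F g = (lam W₀)⁻¹ * (F g * lam W₀) := h4
      _ ≤ (lam W₀)⁻¹ * (κ * (2 * (C₃ * Λ))) := mul_le_mul_right h3 _
      _ = Denn * Λ := by rw [hDenndef]; ring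
  -- back to the reals
  have hreal : ∀ g ∈ S, ‖b g‖ ^ p ≤ Dr * Ip := by
    intro g hg
    have h := hSbound g hg
    have h2 := ENNReal.toReal_mono (ENNReal.mul_ne_top hDenn_top hΛtop) h
    rw [hFdef] at h2
    simp only at h2
    rwa [ENNReal.toReal_ofReal (Real.rpow_nonneg (norm_nonneg _) p),
      ENNReal.toReal_mul, hLam, ENNReal.toReal_ofReal hIp0] at h2
  have hnormle : ∀ g ∈ S, ‖b g‖ ≤ Dr ^ (1 / p) * Ip ^ (1 / p) := by
    intro g hg
    have h0 : ‖b g‖ = (‖b g‖ ^ p) ^ (1 / p) := by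
      rw [← Real.rpow_mul (norm_nonneg _), mul_one_div_cancel hp0ne, Real.rpow_one]
    rw [h0]
    calc (‖b g‖ ^ p) ^ (1 / p) ≤ (Dr * Ip) ^ (1 / p) :=
        Real.rpow_le_rpow (Real.rpow_nonneg (norm_nonneg _) p) (hreal g hg) (by positivity)
      _ = Dr ^ (1 / p) * Ip ^ (1 / p) := Real.mul_rpow hDr0 hIp0
  have hMle : M ≤ C * Ip ^ (1 / p) := by
    rcases S.eq_empty_or_nonempty with hS | hS
    · rw [hMdef, hS]
      simp only [Set.image_empty, Real.sSup_empty]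
      positivity
    · refine csSup_le (hS.image _) ?_
      rintro x ⟨g, hg, rfl⟩
      have hD : Dr ^ (1 / p) ≤ C := le_trans (le_max_right _ _) (le_max_right _ _)
      calc ‖b g‖ ≤ Dr ^ (1 / p) * Ip ^ (1 / p) := hnormle g hg
        _ ≤ C * Ip ^ (1 / p) :=
            mul_le_mul_of_nonneg_right hD (Real.rpow_nonneg hIp0 _)
  have hgoal1 : C⁻¹ * M ≤ Ip ^ (1 / p) := by
    calc C⁻¹ * M ≤ C⁻¹ * (C * Ip ^ (1 / p)) :=
        mul_le_mul_of_nonneg_left hMle (by positivity)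
      _ = Ip ^ (1 / p) := by field_simp
  exact ⟨hgoal1, hgoal2⟩
end
end

section
/- Let G be a locally compact second countable, compactly generated group with compact symmetric generating set S, and let μ be a cohomologically adapted probability measure on G. Let p > 1 and c > 0, let E be a real Banach space satisfying the (p,c)-uniform convexity inequality with duality map, let π : G → O(E) be a strongly continuous isometric linear representation, and let b ∈ Z¹(G, π) be a μ-harmonic 1-cocycle. Then for every n ≥ 1: ∫_G ‖b(g)‖^p dμ^{*n}(g) ≥ (c(n−1) + 1) · ∫_G ‖b(g)‖^p dμ(g). -/
open Pointwise
open scoped ENNReal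

noncomputable section

open Classical in
/-- `x^{*_p} = ‖x‖^{p−2}·Jx` for `x ≠ 0`, and `0^{*_p} = 0`. -/
def starMap {E : Type*} [NormedAddCommGroup E] [NormedSpace ℝ E]
    (J : E → StrongDual ℝ E) (p : ℝ) (x : E) : StrongDual ℝ E :=
  if x = 0 then 0 else ‖x‖ ^ (p - 2) • J x

/-- `E` satisfies the `(p,c)`-uniform convexity inequality with duality map `J`:
`J` is continuous, `⟨x, Jx⟩ = ‖x‖²`, `‖Jx‖ = ‖x‖` and
`‖x+y‖^p ≥ ‖x‖^p + p⟨y, x^{*_p}⟩ + c‖y‖^p`. -/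
structure IsConvexDualityMap {E : Type*} [NormedAddCommGroup E] [NormedSpace ℝ E]
    (p c : ℝ) (J : E → StrongDual ℝ E) : Prop where
  continuous : Continuous J
  pairing : ∀ x : E, J x x = ‖x‖ ^ 2
  norm_eq : ∀ x : E, ‖J x‖ = ‖x‖
  ineq : ∀ x y : E, ‖x‖ ^ p + p * starMap J p x y + c * ‖y‖ ^ p ≤ ‖x + y‖ ^ p

/- STATEMENT 9: lower bound for the average growth of `μ`-harmonic 1-cocycles on
smooth `(p,c)`-uniformly convex Banach spaces:
`‖b‖_{L^p(μ^{*n})}^p ≥ (c(n−1)+1)·‖b‖_{L^p(μ)}^p`. -/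
theorem harmonic_cocycle_growth_uniformly_convex
    {G : Type*} [Group G] [TopologicalSpace G] [IsTopologicalGroup G]
    [LocallyCompactSpace G] [SecondCountableTopology G]
    [MeasurableSpace G] [BorelSpace G]
    (S : Set G) (hScpt : IsCompact S) (hSsymm : S⁻¹ = S)
    (hSgen : ∀ g : G, ∃ n : ℕ, g ∈ S ^ n)
    (μ : MeasureTheory.Measure G) (hμ : CohomologicallyAdapted S μ)
    (p c : ℝ) (hp : 1 < p) (hc : 0 < c)
    {E : Type*} [NormedAddCommGroup E] [NormedSpace ℝ E] [CompleteSpace E]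
    (hE : ∃ J : E → StrongDual ℝ E, IsConvexDualityMap p c J)
    (π : G →* (E ≃ₗᵢ[ℝ] E)) (hπ : ∀ x : E, Continuous fun g : G => π g x)
    (b : G → E) (hb : Continuous b)
    (hcoc : ∀ g h : G, b (g * h) = b g + π g (b h))
    (hharm : ∫ g, b g ∂μ = 0) :
    ∀ n : ℕ, 1 ≤ n →
      (c * ((n : ℝ) - 1) + 1) * ∫ g, ‖b g‖ ^ p ∂μ
        ≤ ∫ g, ‖b g‖ ^ p ∂(convPow μ n) := by
  classical
  open MeasureTheory in
  obtain ⟨J, hJ⟩ := hE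
  haveI : IsProbabilityMeasure μ := hμ.isProb
  have hp0 : (0:ℝ) ≤ p := by linarith
  -- basic cocycle facts
  have hb1 : b 1 = 0 := by
    have h := hcoc 1 1
    simp only [one_mul, map_one] at h
    have : b 1 = b 1 + b 1 := by simpa using h
    have := left_eq_add.mp this
    simpa using this
  -- a bound on S
  obtain ⟨M, hM0, hMS⟩ : ∃ M : ℝ, 0 ≤ M ∧ ∀ s ∈ S, ‖b s‖ ≤ M := by
    obtain ⟨C, hC⟩ := hScpt.exists_bound_of_continuousOn hb.continuousOn
    exact ⟨max C 0, le_max_right _ _, fun s hs => (hC s hs).trans (le_max_left _ _)⟩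
  -- growth bound via word length
  have hpowb : ∀ n : ℕ, ∀ g ∈ S ^ n, ‖b g‖ ≤ n * M := by
    intro n
    induction n with
    | zero =>
      intro g hg
      rw [pow_zero, Set.mem_one] at hg
      subst hg
      simp [hb1]
    | succ n ih =>
      intro g hg
      rw [pow_succ] at hg
      obtain ⟨a, ha, s, hs, rfl⟩ := hg
      have h1 : ‖b (a * s)‖ ≤ ‖b a‖ + ‖π a (b s)‖ := by
        rw [hcoc]; exact norm_add_le _ _
      have h2 : ‖π a (b s)‖ = ‖b s‖ := (π a).norm_map _
      have := ih a ha
      have := hMS s hs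
      push_cast
      rw [h2] at h1
      linarith
  have hword : ∀ g : G, ‖b g‖ ≤ M * (wordLength S g : ℝ) := by
    intro g
    have hne : {n : ℕ | g ∈ S ^ n}.Nonempty := hSgen g
    have hmem : g ∈ S ^ (wordLength S g) := Nat.sInf_mem hne
    have := hpowb _ g hmem
    linarith [this, mul_comm (wordLength S g : ℝ) M]
  -- measurability
  have hfc : Continuous fun g : G => ‖b g‖ ^ p :=
    (Real.continuous_rpow_const hp0).comp hb.norm
  have hmul : Measurable fun q : G × G => q.1 * q.2 := measurable_mul
  -- integrability w.r.t. μ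
  have hIb : Integrable b μ := by
    refine Integrable.mono' ((hμ.finiteMoments 1 le_rfl).const_mul M)
      hb.stronglyMeasurable.aestronglyMeasurable ?_
    filter_upwards with g
    rw [Real.rpow_one]
    exact hword g
  have hI1 : Integrable (fun g => ‖b g‖ ^ p) μ := by
    refine Integrable.mono' ((hμ.finiteMoments p hp.le).const_mul (M ^ p))
      hfc.stronglyMeasurable.aestronglyMeasurable ?_
    filter_upwards with g
    rw [Real.norm_of_nonneg (Real.rpow_nonneg (norm_nonneg _) _)]
    calc ‖b g‖ ^ p ≤ (M * (wordLength S g : ℝ)) ^ p :=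
          Real.rpow_le_rpow (norm_nonneg _) (hword g) hp0
      _ = M ^ p * (wordLength S g : ℝ) ^ p := Real.mul_rpow hM0 (Nat.cast_nonneg _)
  set I₁ : ℝ := ∫ g, ‖b g‖ ^ p ∂μ with hI₁
  -- elementary rpow bound
  have hrpow2 : ∀ a β : ℝ, 0 ≤ a → 0 ≤ β → (a + β) ^ p ≤ 2 ^ p * (a ^ p + β ^ p) := by
    intro a β ha hβ
    have h2 : (0:ℝ) ≤ (2:ℝ) ^ p := Real.rpow_nonneg (by norm_num) _
    rcases le_total a β with h | h
    · calc (a + β) ^ p ≤ (2 * β) ^ p :=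
            Real.rpow_le_rpow (by linarith) (by linarith) hp0
        _ = 2 ^ p * β ^ p := Real.mul_rpow (by norm_num) hβ
        _ ≤ 2 ^ p * (a ^ p + β ^ p) := by
            have := Real.rpow_nonneg ha p
            nlinarith
    · calc (a + β) ^ p ≤ (2 * a) ^ p :=
            Real.rpow_le_rpow (by linarith) (by linarith) hp0
        _ = 2 ^ p * a ^ p := Real.mul_rpow (by norm_num) ha
        _ ≤ 2 ^ p * (a ^ p + β ^ p) := by
            have := Real.rpow_nonneg hβ p
            nlinarith
  have hptbound : ∀ g h : G, ‖b (g * h)‖ ^ p ≤ 2 ^ p * (‖b g‖ ^ p + ‖b h‖ ^ p) := by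
    intro g h
    have h1 : ‖b (g * h)‖ ≤ ‖b g‖ + ‖b h‖ := by
      rw [hcoc]
      calc ‖b g + π g (b h)‖ ≤ ‖b g‖ + ‖π g (b h)‖ := norm_add_le _ _
        _ = ‖b g‖ + ‖b h‖ := by rw [(π g).norm_map]
    calc ‖b (g * h)‖ ^ p ≤ (‖b g‖ + ‖b h‖) ^ p :=
          Real.rpow_le_rpow (norm_nonneg _) h1 hp0
      _ ≤ 2 ^ p * (‖b g‖ ^ p + ‖b h‖ ^ p) :=
          hrpow2 _ _ (norm_nonneg _) (norm_nonneg _)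
  -- the main one-step inequality
  have step : ∀ ρ : MeasureTheory.Measure G, IsProbabilityMeasure ρ →
      Integrable (fun g => ‖b g‖ ^ p) ρ →
      Integrable (fun g => ‖b g‖ ^ p)
          (MeasureTheory.Measure.map (fun q : G × G => q.1 * q.2) (ρ.prod μ)) ∧
      (∫ g, ‖b g‖ ^ p ∂ρ) + c * I₁ ≤
        ∫ g, ‖b g‖ ^ p ∂(MeasureTheory.Measure.map (fun q : G × G => q.1 * q.2) (ρ.prod μ)) := by
    intro ρ hρprob hρint
    have hfst : Integrable (fun q : G × G => ‖b q.1‖ ^ p) (ρ.prod μ) := by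
      simpa using hρint.mul_prod (integrable_const (1:ℝ))
    have hsnd : Integrable (fun q : G × G => ‖b q.2‖ ^ p) (ρ.prod μ) := by
      simpa using (integrable_const (1:ℝ)).mul_prod hI1
    have hprod_int : Integrable (fun q : G × G => ‖b (q.1 * q.2)‖ ^ p) (ρ.prod μ) := by
      refine Integrable.mono' ((hfst.add hsnd).const_mul (2 ^ p))
        ((hfc.comp continuous_mul).stronglyMeasurable.aestronglyMeasurable) ?_
      filter_upwards with q
      rw [Real.norm_of_nonneg (Real.rpow_nonneg (norm_nonneg _) _)]
      exact hptbound q.1 q.2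
    have hmap_int : Integrable (fun g => ‖b g‖ ^ p)
        (MeasureTheory.Measure.map (fun q : G × G => q.1 * q.2) (ρ.prod μ)) := by
      rw [integrable_map_measure hfc.stronglyMeasurable.aestronglyMeasurable hmul.aemeasurable]
      exact hprod_int
    refine ⟨hmap_int, ?_⟩
    have hmapeq : ∫ g, ‖b g‖ ^ p ∂(MeasureTheory.Measure.map
        (fun q : G × G => q.1 * q.2) (ρ.prod μ)) =
        ∫ q : G × G, ‖b (q.1 * q.2)‖ ^ p ∂(ρ.prod μ) :=
      integral_map hmul.aemeasurable hfc.stronglyMeasurable.aestronglyMeasurable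
    have hfub : ∫ q : G × G, ‖b (q.1 * q.2)‖ ^ p ∂(ρ.prod μ) =
        ∫ g, ∫ h, ‖b (g * h)‖ ^ p ∂μ ∂ρ :=
      integral_prod _ hprod_int
    -- per-point inequality after integrating in h
    have hper : ∀ g : G, ‖b g‖ ^ p + c * I₁ ≤ ∫ h, ‖b (g * h)‖ ^ p ∂μ := by
      intro g
      set L : E →L[ℝ] ℝ :=
        (starMap J p (b g)).comp (π g).toContinuousLinearEquiv.toContinuousLinearMap with hL
      have hLint : Integrable (fun h => L (b h)) μ := L.integrable_comp hIb
      have hLzero : ∫ h, L (b h) ∂μ = 0 := by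
        rw [L.integral_comp_comm hIb, hharm, map_zero]
      have hint_rhs : Integrable (fun h => ‖b (g * h)‖ ^ p) μ := by
        refine Integrable.mono' (((integrable_const (‖b g‖ ^ p)).add hI1).const_mul (2 ^ p))
          ((hfc.comp (continuous_mul_left g)).stronglyMeasurable.aestronglyMeasurable) ?_
        filter_upwards with h
        rw [Real.norm_of_nonneg (Real.rpow_nonneg (norm_nonneg _) _)]
        exact hptbound g h
      have hint_lhs : Integrable
          (fun h => ‖b g‖ ^ p + (p * L (b h) + c * ‖b h‖ ^ p)) μ :=
        (integrable_const _).add ((hLint.const_mul p).add (hI1.const_mul c))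
      have hpt : ∀ h : G, ‖b g‖ ^ p + (p * L (b h) + c * ‖b h‖ ^ p) ≤ ‖b (g * h)‖ ^ p := by
        intro h
        have hineq := hJ.ineq (b g) (π g (b h))
        rw [(π g).norm_map] at hineq
        have hLapp : L (b h) = starMap J p (b g) (π g (b h)) := rfl
        rw [hLapp]
        rw [hcoc]
        linarith
      calc ‖b g‖ ^ p + c * I₁
          = ∫ h, (‖b g‖ ^ p + (p * L (b h) + c * ‖b h‖ ^ p)) ∂μ := by
            have hB : Integrable (fun h : G => p * L (b h)) μ := hLint.const_mul p
            have hC : Integrable (fun h : G => c * ‖b h‖ ^ p) μ := hI1.const_mul c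
            have hA : Integrable (fun h : G => p * L (b h) + c * ‖b h‖ ^ p) μ := hB.add hC
            rw [integral_add (integrable_const _) hA]
            rw [integral_add hB hC,
              integral_const, probReal_univ, one_smul,
              integral_const_mul, integral_const_mul, hLzero]
            ring
        _ ≤ ∫ h, ‖b (g * h)‖ ^ p ∂μ := integral_mono hint_lhs hint_rhs hpt
    have hFint : Integrable (fun g => ∫ h, ‖b (g * h)‖ ^ p ∂μ) ρ := by
      have := hprod_int.integral_prod_left
      simpa using this
    calc (∫ g, ‖b g‖ ^ p ∂ρ) + c * I₁
        = ∫ g, (‖b g‖ ^ p + c * I₁) ∂ρ := by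
          rw [integral_add hρint (integrable_const _), integral_const, probReal_univ,
            one_smul]
      _ ≤ ∫ g, ∫ h, ‖b (g * h)‖ ^ p ∂μ ∂ρ :=
          integral_mono (hρint.add (integrable_const _)) hFint hper
      _ = ∫ g, ‖b g‖ ^ p ∂(MeasureTheory.Measure.map
            (fun q : G × G => q.1 * q.2) (ρ.prod μ)) := by rw [hmapeq, hfub]
  -- probability of convolution powers
  have hprob : ∀ n : ℕ, IsProbabilityMeasure (convPow μ n) := by
    intro n
    induction n with
    | zero =>
      show IsProbabilityMeasure (MeasureTheory.Measure.dirac (1:G))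
      infer_instance
    | succ n ih =>
      show IsProbabilityMeasure (MeasureTheory.Measure.map _ ((convPow μ n).prod μ))
      haveI := ih
      exact Measure.isProbabilityMeasure_map hmul.aemeasurable
  have hc1 : convPow μ 1 = μ := by
    show MeasureTheory.Measure.map (fun q : G × G => q.1 * q.2)
      ((MeasureTheory.Measure.dirac 1).prod μ) = μ
    rw [MeasureTheory.Measure.dirac_prod,
      MeasureTheory.Measure.map_map hmul measurable_prodMk_left]
    have : ((fun q : G × G => q.1 * q.2) ∘ Prod.mk (1:G)) = id := by
      funext h; simp
    rw [this, MeasureTheory.Measure.map_id]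
  -- main induction
  have main : ∀ n : ℕ, 1 ≤ n → Integrable (fun g => ‖b g‖ ^ p) (convPow μ n) ∧
      (c * ((n : ℝ) - 1) + 1) * I₁ ≤ ∫ g, ‖b g‖ ^ p ∂(convPow μ n) := by
    intro n hn
    induction n, hn using Nat.le_induction with
    | base =>
      rw [hc1]
      refine ⟨hI1, ?_⟩
      have : (c * ((1:ℕ) - 1 : ℝ) + 1) = 1 := by norm_num
      rw [this, one_mul]
    | succ n hn ih =>
      obtain ⟨hint, hle⟩ := ih
      obtain ⟨hint', hle'⟩ := step (convPow μ n) (hprob n) hint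
      have hconveq : convPow μ (n + 1) =
          MeasureTheory.Measure.map (fun q : G × G => q.1 * q.2) ((convPow μ n).prod μ) := rfl
      constructor
      · rw [hconveq]; exact hint'
      · rw [hconveq]
        have hring : (c * (((n:ℝ) + 1) - 1) + 1) * I₁ =
            (c * ((n:ℝ) - 1) + 1) * I₁ + c * I₁ := by ring
        push_cast
        rw [hring]
        linarith
  intro n hn
  exact (main n hn).2
end
end

section
/- Let G be a locally compact second countable, compactly generated group with compact symmetric generating set S, and let μ be a cohomologically adapted probability measure on G. Let 1 < q ≤ 2 and d > 0, let E be a real Banach space satisfying the (q,d)-uniform smoothness inequality with duality map, let π : G → O(E) be a strongly continuous isometric linear representation, and let b ∈ Z¹(G, π) be a μ-harmonic 1-cocycle. Then for every n ≥ 1: ∫_G ‖b(g)‖^q dμ^{*n}(g) ≤ (d(n−1) + 1) · ∫_G ‖b(g)‖^q dμ(g). -/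
open Pointwise
open scoped ENNReal

noncomputable section

/-- `E` satisfies the `(q,d)`-uniform smoothness inequality with duality map `J`:
`J` is continuous, `⟨x, Jx⟩ = ‖x‖²`, `‖Jx‖ = ‖x‖` and
`‖x+y‖^q ≤ ‖x‖^q + q⟨y, x^{*_q}⟩ + d‖y‖^q`. -/
structure IsSmoothDualityMap {E : Type*} [NormedAddCommGroup E] [NormedSpace ℝ E]
    (q d : ℝ) (J : E → StrongDual ℝ E) : Prop where
  continuous : Continuous J
  pairing : ∀ x : E, J x x = ‖x‖ ^ 2
  norm_eq : ∀ x : E, ‖J x‖ = ‖x‖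
  ineq : ∀ x y : E, ‖x + y‖ ^ q ≤ ‖x‖ ^ q + q * starMap J q x y + d * ‖y‖ ^ q

section MyHelpers
open MeasureTheory Filter

/-- `(a+b)^p ≤ 2^p (a^p + b^p)` for nonneg reals. -/
theorem my_rpow_add_le {a b p : ℝ} (ha : 0 ≤ a) (hb : 0 ≤ b) (hp : 0 ≤ p) :
    (a + b) ^ p ≤ 2 ^ p * (a ^ p + b ^ p) := by
  rcases le_total a b with h | h
  · calc (a + b) ^ p ≤ (2 * b) ^ p := by
          apply Real.rpow_le_rpow (by linarith) (by linarith) hp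
      _ = 2 ^ p * b ^ p := Real.mul_rpow (by norm_num) hb
      _ ≤ 2 ^ p * (a ^ p + b ^ p) := by
          have := Real.rpow_nonneg ha p
          have h2 : (0:ℝ) ≤ 2 ^ p := Real.rpow_nonneg (by norm_num) p
          nlinarith
  · calc (a + b) ^ p ≤ (2 * a) ^ p := by
          apply Real.rpow_le_rpow (by linarith) (by linarith) hp
      _ = 2 ^ p * a ^ p := Real.mul_rpow (by norm_num) ha
      _ ≤ 2 ^ p * (a ^ p + b ^ p) := by
          have := Real.rpow_nonneg hb p
          have h2 : (0:ℝ) ≤ 2 ^ p := Real.rpow_nonneg (by norm_num) p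
          nlinarith

theorem my_integrable_comp_fst {α β : Type*} [MeasurableSpace α] [MeasurableSpace β]
    {ν : Measure α} {μ : Measure β} [SFinite ν] [IsProbabilityMeasure μ] {f : α → ℝ}
    (hi : Integrable f ν) :
    Integrable (fun z : α × β => f z.1) (ν.prod μ) := by
  have hmap : Measure.map Prod.fst (ν.prod μ) = ν := by
    rw [Measure.map_fst_prod, measure_univ, one_smul]
  have hsm : AEStronglyMeasurable f (Measure.map Prod.fst (ν.prod μ)) := by
    rw [hmap]; exact hi.aestronglyMeasurable
  exact (integrable_map_measure hsm measurable_fst.aemeasurable).mp (by rwa [hmap])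

theorem my_integrable_comp_snd {α β : Type*} [MeasurableSpace α] [MeasurableSpace β]
    {ν : Measure α} {μ : Measure β} [IsProbabilityMeasure ν] [SFinite μ] {f : β → ℝ}
    (hi : Integrable f μ) :
    Integrable (fun z : α × β => f z.2) (ν.prod μ) := by
  have hmap : Measure.map Prod.snd (ν.prod μ) = μ := by
    rw [Measure.map_snd_prod, measure_univ, one_smul]
  have hsm : AEStronglyMeasurable f (Measure.map Prod.snd (ν.prod μ)) := by
    rw [hmap]; exact hi.aestronglyMeasurable
  exact (integrable_map_measure hsm measurable_snd.aemeasurable).mp (by rwa [hmap])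

theorem my_integral_comp_fst {α β : Type*} [MeasurableSpace α] [MeasurableSpace β]
    {ν : Measure α} {μ : Measure β} [SFinite ν] [IsProbabilityMeasure μ] {f : α → ℝ}
    (hf : AEStronglyMeasurable f ν) :
    ∫ z, f z.1 ∂(ν.prod μ) = ∫ x, f x ∂ν := by
  have hmap : Measure.map Prod.fst (ν.prod μ) = ν := by
    rw [Measure.map_fst_prod, measure_univ, one_smul]
  have hsm : AEStronglyMeasurable f (Measure.map Prod.fst (ν.prod μ)) := by
    rw [hmap]; exact hf
  rw [← integral_map measurable_fst.aemeasurable hsm, hmap]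

theorem my_integral_comp_snd {α β : Type*} [MeasurableSpace α] [MeasurableSpace β]
    {ν : Measure α} {μ : Measure β} [IsProbabilityMeasure ν] [SFinite μ] {f : β → ℝ}
    (hf : AEStronglyMeasurable f μ) :
    ∫ z, f z.2 ∂(ν.prod μ) = ∫ x, f x ∂μ := by
  have hmap : Measure.map Prod.snd (ν.prod μ) = μ := by
    rw [Measure.map_snd_prod, measure_univ, one_smul]
  have hsm : AEStronglyMeasurable f (Measure.map Prod.snd (ν.prod μ)) := by
    rw [hmap]; exact hf
  rw [← integral_map measurable_snd.aemeasurable hsm, hmap]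


theorem my_starMap_norm {E : Type*} [NormedAddCommGroup E] [NormedSpace ℝ E]
    {J : E → StrongDual ℝ E} (hJ : ∀ x, ‖J x‖ = ‖x‖) (q : ℝ) (x : E) :
    ‖starMap J q x‖ ≤ ‖x‖ ^ (q - 1) := by
  unfold starMap
  split_ifs with h
  · simp [Real.rpow_nonneg (norm_nonneg x)]
  · have hx : (0:ℝ) < ‖x‖ := norm_pos_iff.mpr h
    rw [norm_smul, hJ, Real.norm_eq_abs, abs_of_nonneg (Real.rpow_nonneg (norm_nonneg x) _)]
    apply le_of_eq
    calc ‖x‖ ^ (q - 2) * ‖x‖ = ‖x‖ ^ (q - 2) * ‖x‖ ^ (1:ℝ) := by rw [Real.rpow_one]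
      _ = ‖x‖ ^ (q - 2 + 1) := (Real.rpow_add hx _ _).symm
      _ = ‖x‖ ^ (q - 1) := by congr 1; ring

theorem my_starMap_apply_le {E : Type*} [NormedAddCommGroup E] [NormedSpace ℝ E]
    {J : E → StrongDual ℝ E} (hJ : ∀ x, ‖J x‖ = ‖x‖) (q : ℝ) (x y : E) :
    |starMap J q x y| ≤ ‖x‖ ^ (q - 1) * ‖y‖ := by
  calc |starMap J q x y| ≤ ‖starMap J q x‖ * ‖y‖ := (starMap J q x).le_opNorm y
    _ ≤ ‖x‖ ^ (q - 1) * ‖y‖ := by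
        gcongr
        exact my_starMap_norm hJ q x

theorem my_starMap_continuous {E : Type*} [NormedAddCommGroup E] [NormedSpace ℝ E]
    {J : E → StrongDual ℝ E} (hJc : Continuous J) (hJ : ∀ x, ‖J x‖ = ‖x‖)
    {q : ℝ} (hq : 1 < q) : Continuous (starMap J q) := by
  rw [continuous_iff_continuousAt]
  intro x
  by_cases hx : x = 0
  · subst hx
    have h0 : starMap J q 0 = 0 := by simp [starMap]
    rw [ContinuousAt, h0]
    have hb : Tendsto (fun y : E => ‖y‖ ^ (q - 1)) (nhds 0) (nhds 0) := by
      have : Tendsto (fun y : E => ‖y‖) (nhds 0) (nhds 0) := by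
        simpa using continuous_norm.tendsto (0:E)
      have hc : ContinuousAt (fun t : ℝ => t ^ (q-1)) 0 :=
        Real.continuousAt_rpow_const 0 (q-1) (Or.inr (by linarith))
      have h2 := hc.tendsto.comp this
      rw [Real.zero_rpow (by intro h; linarith [sub_eq_zero.mp h] : q - 1 ≠ 0)] at h2
      exact h2
    exact squeeze_zero_norm (my_starMap_norm hJ q) hb
  · have hev : ∀ᶠ y in nhds x, starMap J q y = ‖y‖ ^ (q - 2) • J y := by
      filter_upwards [eventually_ne_nhds hx] with y hy
      simp [starMap, hy]
    apply ContinuousAt.congr ?_ (Filter.EventuallyEq.symm hev)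
    apply ContinuousAt.smul (f := fun y : E => ‖y‖ ^ (q - 2)) ?_ hJc.continuousAt
    exact (Real.continuousAt_rpow_const ‖x‖ (q-2)
      (Or.inl (by simpa using hx))).comp continuous_norm.continuousAt

theorem my_rep_joint_continuous {G : Type*} [Group G] [TopologicalSpace G]
    {E : Type*} [NormedAddCommGroup E] [NormedSpace ℝ E]
    (π : G →* (E ≃ₗᵢ[ℝ] E)) (hπ : ∀ x : E, Continuous fun g : G => π g x) :
    Continuous (fun z : G × E => π z.1 z.2) := by
  rw [continuous_iff_continuousAt]
  rintro ⟨g₀, x₀⟩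
  rw [ContinuousAt, tendsto_iff_norm_sub_tendsto_zero]
  apply squeeze_zero (fun z => norm_nonneg _)
    (g := fun z : G × E => ‖z.2 - x₀‖ + ‖π z.1 x₀ - π g₀ x₀‖)
  · intro z
    calc ‖π z.1 z.2 - π g₀ x₀‖ ≤ ‖π z.1 z.2 - π z.1 x₀‖ + ‖π z.1 x₀ - π g₀ x₀‖ :=
          norm_sub_le_norm_sub_add_norm_sub _ _ _
      _ = ‖z.2 - x₀‖ + ‖π z.1 x₀ - π g₀ x₀‖ := by
          rw [← map_sub (π z.1), (π z.1).norm_map]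
  · have h1 : Tendsto (fun z : G × E => ‖z.2 - x₀‖) (nhds (g₀, x₀)) (nhds 0) := by
      have : Tendsto (fun z : G × E => z.2 - x₀) (nhds (g₀, x₀)) (nhds (x₀ - x₀)) :=
        (continuous_snd.sub continuous_const).tendsto _
      simpa using this.norm
    have h2 : Tendsto (fun z : G × E => ‖π z.1 x₀ - π g₀ x₀‖) (nhds (g₀, x₀)) (nhds 0) := by
      have : Tendsto (fun z : G × E => π z.1 x₀ - π g₀ x₀) (nhds (g₀, x₀))
          (nhds (π g₀ x₀ - π g₀ x₀)) :=
        (((hπ x₀).comp continuous_fst).sub continuous_const).tendsto _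
      simpa using this.norm
    simpa using h1.add h2


theorem my_cocycle_one {G : Type*} [Group G] {E : Type*} [NormedAddCommGroup E]
    [NormedSpace ℝ E] (π : G →* (E ≃ₗᵢ[ℝ] E)) (b : G → E)
    (hcoc : ∀ g h : G, b (g * h) = b g + π g (b h)) : b 1 = 0 := by
  have h := hcoc 1 1
  simp only [mul_one, map_one, LinearIsometryEquiv.coe_one, id_eq] at h
  exact (left_eq_add.mp h)

theorem my_cocycle_bound {G : Type*} [Group G] {E : Type*} [NormedAddCommGroup E]
    [NormedSpace ℝ E] (π : G →* (E ≃ₗᵢ[ℝ] E)) (b : G → E)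
    (hcoc : ∀ g h : G, b (g * h) = b g + π g (b h))
    {S : Set G} {C : ℝ} (hC : ∀ s ∈ S, ‖b s‖ ≤ C) :
    ∀ n : ℕ, ∀ g ∈ S ^ n, ‖b g‖ ≤ n * C := by
  intro n
  induction n with
  | zero =>
      intro g hg
      rw [pow_zero, Set.mem_one] at hg
      subst hg
      rw [my_cocycle_one π b hcoc]
      simp
  | succ n ih =>
      intro g hg
      rw [pow_succ] at hg
      rcases Set.mem_mul.mp hg with ⟨h, hh, s, hs, rfl⟩
      calc ‖b (h * s)‖ = ‖b h + π h (b s)‖ := by rw [hcoc]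
        _ ≤ ‖b h‖ + ‖π h (b s)‖ := norm_add_le _ _
        _ = ‖b h‖ + ‖b s‖ := by rw [(π h).norm_map]
        _ ≤ n * C + C := add_le_add (ih h hh) (hC s hs)
        _ = (n + 1) * C := by ring
        _ = ((n + 1 : ℕ) : ℝ) * C := by push_cast; ring

theorem my_wordLength_mem {G : Type*} [Group G] {S : Set G}
    (hSgen : ∀ g : G, ∃ n : ℕ, g ∈ S ^ n) (g : G) : g ∈ S ^ wordLength S g :=
  Nat.sInf_mem (hSgen g)

theorem my_growth_bound {G : Type*} [Group G] [TopologicalSpace G]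
    {E : Type*} [NormedAddCommGroup E] [NormedSpace ℝ E]
    (π : G →* (E ≃ₗᵢ[ℝ] E)) (b : G → E) (hb : Continuous b)
    (hcoc : ∀ g h : G, b (g * h) = b g + π g (b h))
    {S : Set G} (hScpt : IsCompact S) (hSgen : ∀ g : G, ∃ n : ℕ, g ∈ S ^ n) :
    ∃ C : ℝ, 0 ≤ C ∧ ∀ g : G, ‖b g‖ ≤ C * ((wordLength S g : ℝ) + 1) := by
  obtain ⟨C₀, hC₀⟩ := hScpt.exists_bound_of_continuousOn hb.continuousOn
  refine ⟨max C₀ 0, le_max_right _ _, fun g => ?_⟩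
  have hC' : ∀ s ∈ S, ‖b s‖ ≤ max C₀ 0 := fun s hs => (hC₀ s hs).trans (le_max_left _ _)
  have h := my_cocycle_bound π b hcoc hC' (wordLength S g) g (my_wordLength_mem hSgen g)
  have hw : (0:ℝ) ≤ (wordLength S g : ℝ) := Nat.cast_nonneg _
  nlinarith [le_max_right C₀ 0]

theorem my_base_integrable {G : Type*} [MeasurableSpace G] [Group G]
    {S : Set G} {μ : Measure G} [IsProbabilityMeasure μ]
    (hmom : ∀ p : ℝ, 1 ≤ p → Integrable (fun g => (wordLength S g : ℝ) ^ p) μ)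
    {f : G → ℝ} (hfm : AEStronglyMeasurable (fun g => f g) μ)
    (hf0 : ∀ g, 0 ≤ f g) {C : ℝ} (hC : 0 ≤ C)
    (hCb : ∀ g, f g ≤ C * ((wordLength S g : ℝ) + 1)) {p : ℝ} (hp : 0 ≤ p) :
    Integrable (fun g => f g ^ p) μ := by
  set r := max p 1 with hr
  have hr1 : (1:ℝ) ≤ r := le_max_right _ _
  have hr0 : (0:ℝ) ≤ r := by linarith
  apply Integrable.mono' (g := fun g => 1 + C ^ r * (2 ^ r * ((wordLength S g : ℝ) ^ r + 1)))
  · exact (integrable_const 1).add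
      ((((hmom r hr1).add (integrable_const 1)).const_mul ((2:ℝ) ^ r)).const_mul (C ^ r))
  · exact (Real.continuous_rpow_const hp).comp_aestronglyMeasurable hfm
  · filter_upwards with g
    have hw : (0:ℝ) ≤ (wordLength S g : ℝ) := Nat.cast_nonneg _
    have hfg := hf0 g
    rw [Real.norm_eq_abs, abs_of_nonneg (Real.rpow_nonneg hfg p)]
    have h1 : f g ^ p ≤ 1 + f g ^ r := by
      rcases le_total (f g) 1 with h | h
      · have := Real.rpow_le_one hfg h hp
        have := Real.rpow_nonneg hfg r
        linarith
      · have := Real.rpow_le_rpow_of_exponent_le h (le_max_left p 1)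
        linarith
    have h2 : f g ^ r ≤ (C * ((wordLength S g : ℝ) + 1)) ^ r :=
      Real.rpow_le_rpow hfg (hCb g) hr0
    have h3 : (C * ((wordLength S g : ℝ) + 1)) ^ r
        = C ^ r * ((wordLength S g : ℝ) + 1) ^ r :=
      Real.mul_rpow hC (by positivity)
    have h4 : ((wordLength S g : ℝ) + 1) ^ r ≤ 2 ^ r * ((wordLength S g : ℝ) ^ r + 1) := by
      have := my_rpow_add_le hw (zero_le_one) hr0
      rwa [Real.one_rpow] at this
    have hCr : (0:ℝ) ≤ C ^ r := Real.rpow_nonneg hC r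
    nlinarith


variable {G : Type*} [Group G] [TopologicalSpace G] [IsTopologicalGroup G]
    [SecondCountableTopology G] [MeasurableSpace G] [BorelSpace G]
    {μ : Measure G}

theorem my_convPow_isProb [IsProbabilityMeasure μ] (n : ℕ) :
    IsProbabilityMeasure (convPow μ n) := by
  induction n with
  | zero => rw [convPow]; infer_instance
  | succ n ih =>
      rw [convPow]
      have : IsProbabilityMeasure ((convPow μ n).prod μ) := by infer_instance
      exact Measure.isProbabilityMeasure_map measurable_mul.aemeasurable

theorem my_convPow_one [IsProbabilityMeasure μ] : convPow μ 1 = μ := by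
  rw [convPow, convPow, Measure.dirac_prod,
    Measure.map_map measurable_mul measurable_prodMk_left]
  have : ((fun q : G × G => q.1 * q.2) ∘ Prod.mk 1) = fun g : G => g := by
    funext g; simp
  rw [this]; exact Measure.map_id

end MyHelpers

section MyMain
open MeasureTheory Filter

variable {G : Type*} [Group G] [TopologicalSpace G] [IsTopologicalGroup G]
    [SecondCountableTopology G] [MeasurableSpace G] [BorelSpace G]
    {E : Type*} [NormedAddCommGroup E] [NormedSpace ℝ E] [CompleteSpace E]

theorem my_conv_integrable {S : Set G} (hScpt : IsCompact S)
    (hSgen : ∀ g : G, ∃ n : ℕ, g ∈ S ^ n)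
    {μ : Measure G} [IsProbabilityMeasure μ]
    (hmom : ∀ p : ℝ, 1 ≤ p → Integrable (fun g => (wordLength S g : ℝ) ^ p) μ)
    (π : G →* (E ≃ₗᵢ[ℝ] E)) (b : G → E) (hb : Continuous b)
    (hcoc : ∀ g h : G, b (g * h) = b g + π g (b h))
    {p : ℝ} (hp : 0 ≤ p) :
    ∀ n : ℕ, 1 ≤ n → Integrable (fun g => ‖b g‖ ^ p) (convPow μ n) := by
  obtain ⟨C, hC0, hCb⟩ := my_growth_bound π b hb hcoc hScpt hSgen
  have hcont : Continuous fun g : G => ‖b g‖ ^ p :=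
    (Real.continuous_rpow_const hp).comp hb.norm
  have hbase : Integrable (fun g => ‖b g‖ ^ p) μ :=
    my_base_integrable hmom hb.norm.aestronglyMeasurable (fun g => norm_nonneg _) hC0 hCb hp
  intro n hn
  induction n, hn using Nat.le_induction with
  | base => rw [my_convPow_one]; exact hbase
  | succ n hn ih =>
      haveI : IsProbabilityMeasure (convPow μ n) := my_convPow_isProb n
      have hdef : convPow μ (n + 1) = MeasureTheory.Measure.map
          (fun z : G × G => z.1 * z.2) ((convPow μ n).prod μ) := rfl
      rw [hdef,
        integrable_map_measure hcont.aestronglyMeasurable measurable_mul.aemeasurable]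
      apply Integrable.mono'
        (g := fun z : G × G => 2 ^ p * (‖b z.1‖ ^ p + ‖b z.2‖ ^ p))
      · exact ((my_integrable_comp_fst ih).add (my_integrable_comp_snd hbase)).const_mul _
      · exact (hcont.comp continuous_mul).aestronglyMeasurable
      · filter_upwards with z
        show ‖‖b (z.1 * z.2)‖ ^ p‖ ≤ _
        rw [Real.norm_eq_abs, abs_of_nonneg (Real.rpow_nonneg (norm_nonneg _) _)]
        calc ‖b (z.1 * z.2)‖ ^ p ≤ (‖b z.1‖ + ‖b z.2‖) ^ p := by
              apply Real.rpow_le_rpow (norm_nonneg _) ?_ hp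
              calc ‖b (z.1 * z.2)‖ = ‖b z.1 + π z.1 (b z.2)‖ := by rw [hcoc]
                _ ≤ ‖b z.1‖ + ‖π z.1 (b z.2)‖ := norm_add_le _ _
                _ = ‖b z.1‖ + ‖b z.2‖ := by rw [(π z.1).norm_map]
          _ ≤ 2 ^ p * (‖b z.1‖ ^ p + ‖b z.2‖ ^ p) :=
              my_rpow_add_le (norm_nonneg _) (norm_nonneg _) hp

theorem my_middle_zero {μ : Measure G} {q : ℝ}
    {J : E → StrongDual ℝ E}
    (π : G →* (E ≃ₗᵢ[ℝ] E)) (b : G → E)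
    (hbint : Integrable b μ) (hharm : ∫ g, b g ∂μ = 0) (g : G) :
    ∫ h, (starMap J q (b g)) (π g (b h)) ∂μ = 0 := by
  set L : E →L[ℝ] ℝ :=
    (starMap J q (b g)).comp (π g).toLinearIsometry.toContinuousLinearMap with hL
  have heq : ∀ h : G, (starMap J q (b g)) (π g (b h)) = L (b h) := fun h => rfl
  simp only [heq]
  rw [L.integral_comp_comm hbint, hharm, map_zero]

theorem my_step {S : Set G} (hScpt : IsCompact S)
    (hSgen : ∀ g : G, ∃ n : ℕ, g ∈ S ^ n)
    {μ : Measure G} [IsProbabilityMeasure μ]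
    (hmom : ∀ p : ℝ, 1 ≤ p → Integrable (fun g => (wordLength S g : ℝ) ^ p) μ)
    {q d : ℝ} (hq1 : 1 < q) (hd : 0 < d)
    {J : E → StrongDual ℝ E} (hJ : IsSmoothDualityMap q d J)
    (π : G →* (E ≃ₗᵢ[ℝ] E)) (hπ : ∀ x : E, Continuous fun g : G => π g x)
    (b : G → E) (hb : Continuous b)
    (hcoc : ∀ g h : G, b (g * h) = b g + π g (b h))
    (hharm : ∫ g, b g ∂μ = 0) (n : ℕ) (hn : 1 ≤ n) :
    ∫ g, ‖b g‖ ^ q ∂(convPow μ (n + 1))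
      ≤ ∫ g, ‖b g‖ ^ q ∂(convPow μ n) + d * ∫ g, ‖b g‖ ^ q ∂μ := by
  haveI : IsProbabilityMeasure (convPow μ n) := my_convPow_isProb n
  have hq0 : (0:ℝ) ≤ q := by linarith
  have hcont : Continuous fun g : G => ‖b g‖ ^ q :=
    (Real.continuous_rpow_const hq0).comp hb.norm
  have hqν : Integrable (fun g => ‖b g‖ ^ q) (convPow μ n) :=
    my_conv_integrable hScpt hSgen hmom π b hb hcoc hq0 n hn
  have hqμ : Integrable (fun g => ‖b g‖ ^ q) μ := by
    have := my_conv_integrable hScpt hSgen hmom π b hb hcoc hq0 1 le_rfl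
    rwa [my_convPow_one] at this
  have hq1ν : Integrable (fun g => ‖b g‖ ^ (q - 1)) (convPow μ n) :=
    my_conv_integrable hScpt hSgen hmom π b hb hcoc (by linarith) n hn
  have h1μ : Integrable (fun h => ‖b h‖) μ := by
    have := my_conv_integrable hScpt hSgen hmom π b hb hcoc zero_le_one 1 le_rfl
    rw [my_convPow_one] at this
    simpa [Real.rpow_one] using this
  have hbint : Integrable b μ := by
    obtain ⟨C, hC0, hCb⟩ := my_growth_bound π b hb hcoc hScpt hSgen
    apply Integrable.mono' (g := fun g => C * ((wordLength S g : ℝ) + 1))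
    · have h1 : Integrable (fun g => (wordLength S g : ℝ)) μ := by
        have := hmom 1 le_rfl; simpa [Real.rpow_one] using this
      exact (h1.add (integrable_const 1)).const_mul C
    · exact hb.aestronglyMeasurable
    · filter_upwards with g; exact hCb g
  set Φ : G × G → ℝ := fun z => (starMap J q (b z.1)) (π z.1 (b z.2)) with hΦdef
  have hΦc : Continuous Φ := by
    have h1 : Continuous fun z : G × G => starMap J q (b z.1) :=
      (my_starMap_continuous hJ.continuous hJ.norm_eq hq1).comp (hb.comp continuous_fst)
    have h2 : Continuous fun z : G × G => π z.1 (b z.2) :=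
      (my_rep_joint_continuous π hπ).comp
        (continuous_fst.prodMk (hb.comp continuous_snd))
    exact isBoundedBilinearMap_apply.continuous.comp (h1.prodMk h2)
  have hΦint : Integrable Φ ((convPow μ n).prod μ) := by
    apply Integrable.mono' (g := fun z : G × G => ‖b z.1‖ ^ (q - 1) * ‖b z.2‖)
    · exact hq1ν.mul_prod h1μ
    · exact hΦc.aestronglyMeasurable
    · filter_upwards with z
      rw [Real.norm_eq_abs]
      calc |Φ z| ≤ ‖b z.1‖ ^ (q - 1) * ‖π z.1 (b z.2)‖ :=
            my_starMap_apply_le hJ.norm_eq q _ _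
        _ = ‖b z.1‖ ^ (q - 1) * ‖b z.2‖ := by rw [(π z.1).norm_map]
  have hΦzero : ∫ z, Φ z ∂((convPow μ n).prod μ) = 0 := by
    rw [integral_prod _ hΦint]
    have hz : ∀ g : G, ∫ h, Φ (g, h) ∂μ = 0 := fun g =>
      my_middle_zero π b hbint hharm g
    simp only [hz, integral_zero]
  have hI2 : Integrable (fun z : G × G => q * Φ z + d * ‖b z.2‖ ^ q)
      ((convPow μ n).prod μ) :=
    (hΦint.const_mul q).add ((my_integrable_comp_snd hqμ).const_mul d)
  have hdef : convPow μ (n + 1) = MeasureTheory.Measure.map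
      (fun z : G × G => z.1 * z.2) ((convPow μ n).prod μ) := rfl
  have key : ∫ g, ‖b g‖ ^ q ∂(convPow μ (n + 1))
      = ∫ z, ‖b (z.1 * z.2)‖ ^ q ∂((convPow μ n).prod μ) := by
    rw [hdef]
    exact integral_map measurable_mul.aemeasurable hcont.aestronglyMeasurable
  rw [key]
  have hle : ∫ z, ‖b (z.1 * z.2)‖ ^ q ∂((convPow μ n).prod μ)
      ≤ ∫ z, (‖b z.1‖ ^ q + (q * Φ z + d * ‖b z.2‖ ^ q)) ∂((convPow μ n).prod μ) := by
    apply integral_mono_of_nonneg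
    · filter_upwards with z; positivity
    · exact (my_integrable_comp_fst hqν).add hI2
    · filter_upwards with z
      have hiq := hJ.ineq (b z.1) (π z.1 (b z.2))
      rw [(π z.1).norm_map] at hiq
      have hz : Φ z = (starMap J q (b z.1)) (π z.1 (b z.2)) := rfl
      rw [hcoc]
      rw [hz]
      linarith
  refine hle.trans (le_of_eq ?_)
  rw [integral_add (my_integrable_comp_fst hqν) hI2,
    integral_add (hΦint.const_mul q) ((my_integrable_comp_snd hqμ).const_mul d),
    integral_const_mul, integral_const_mul, hΦzero,
    my_integral_comp_fst hqν.aestronglyMeasurable,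
    my_integral_comp_snd hqμ.aestronglyMeasurable]
  ring

end MyMain


/- STATEMENT 10: upper bound for the average growth of `μ`-harmonic 1-cocycles on
`(q,d)`-uniformly smooth Banach spaces:
`‖b‖_{L^q(μ^{*n})}^q ≤ (d(n−1)+1)·‖b‖_{L^q(μ)}^q`. -/
theorem harmonic_cocycle_growth_uniformly_smooth
    {G : Type*} [Group G] [TopologicalSpace G] [IsTopologicalGroup G]
    [LocallyCompactSpace G] [SecondCountableTopology G]
    [MeasurableSpace G] [BorelSpace G]
    (S : Set G) (hScpt : IsCompact S) (hSsymm : S⁻¹ = S)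
    (hSgen : ∀ g : G, ∃ n : ℕ, g ∈ S ^ n)
    (μ : MeasureTheory.Measure G) (hμ : CohomologicallyAdapted S μ)
    (q d : ℝ) (hq1 : 1 < q) (hq2 : q ≤ 2) (hd : 0 < d)
    {E : Type*} [NormedAddCommGroup E] [NormedSpace ℝ E] [CompleteSpace E]
    (hE : ∃ J : E → StrongDual ℝ E, IsSmoothDualityMap q d J)
    (π : G →* (E ≃ₗᵢ[ℝ] E)) (hπ : ∀ x : E, Continuous fun g : G => π g x)
    (b : G → E) (hb : Continuous b)
    (hcoc : ∀ g h : G, b (g * h) = b g + π g (b h))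
    (hharm : ∫ g, b g ∂μ = 0) :
    ∀ n : ℕ, 1 ≤ n →
      ∫ g, ‖b g‖ ^ q ∂(convPow μ n)
        ≤ (d * ((n : ℝ) - 1) + 1) * ∫ g, ‖b g‖ ^ q ∂μ := by
  intro n hn
  obtain ⟨J, hJ⟩ := hE
  haveI : MeasureTheory.IsProbabilityMeasure μ := hμ.isProb
  have hpos : 0 ≤ ∫ g, ‖b g‖ ^ q ∂μ :=
    MeasureTheory.integral_nonneg fun g => Real.rpow_nonneg (norm_nonneg _) _
  induction n, hn using Nat.le_induction with
  | base =>
      rw [my_convPow_one]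
      norm_num
  | succ n hn ih =>
      have hstep := my_step hScpt hSgen hμ.finiteMoments hq1 hd hJ π hπ b hb hcoc hharm n hn
      calc ∫ g, ‖b g‖ ^ q ∂(convPow μ (n + 1))
          ≤ ∫ g, ‖b g‖ ^ q ∂(convPow μ n) + d * ∫ g, ‖b g‖ ^ q ∂μ := hstep
        _ ≤ (d * ((n : ℝ) - 1) + 1) * (∫ g, ‖b g‖ ^ q ∂μ) + d * ∫ g, ‖b g‖ ^ q ∂μ := by
            linarith
        _ = (d * (((n : ℕ) + 1 : ℝ) - 1) + 1) * ∫ g, ‖b g‖ ^ q ∂μ := by ring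
        _ = (d * (((n + 1 : ℕ) : ℝ) - 1) + 1) * ∫ g, ‖b g‖ ^ q ∂μ := by push_cast; ring
end
end

section
/- Let G be a locally compact second countable, compactly generated group with compact symmetric generating set S, and let μ and ν be cohomologically adapted probability measures on G. Let H be a real Hilbert space, π : G → O(H) a strongly continuous representation by surjective linear isometries, and b ∈ Z¹(G, π) a 1-cocycle. Then ∫_G ‖b(g)‖² d(μ∗ν)(g) = ∫_G ‖b(g)‖² dμ(g) + ∫_G ‖b(g)‖² dν(g) − 2·⟪ ∫_G b(g) dμ(g), ∫_G b(g) dν(g) ⟫, where μ∗ν is the convolution of μ and ν and ⟪·,·⟫ is the inner product of H. -/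
open Pointwise
open scoped ENNReal

noncomputable section

/-- Convolution of two measures on a group: the pushforward of the product measure
under multiplication. -/
def mconv {G : Type*} [Monoid G] [MeasurableSpace G]
    (μ ν : MeasureTheory.Measure G) : MeasureTheory.Measure G :=
  MeasureTheory.Measure.map (fun q : G × G => q.1 * q.2) (μ.prod ν)

open MeasureTheory in
open scoped RealInnerProductSpace in
/-- Auxiliary: integrability facts for a cocycle under a cohomologically adapted measure. -/
theorem cocycle_integrable_aux
    {G : Type*} [Group G] [TopologicalSpace G] [IsTopologicalGroup G]
    [LocallyCompactSpace G] [SecondCountableTopology G]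
    [MeasurableSpace G] [BorelSpace G]
    (S : Set G) (hScpt : IsCompact S)
    (hSgen : ∀ g : G, ∃ n : ℕ, g ∈ S ^ n)
    (μ : MeasureTheory.Measure G)
    (hμ : CohomologicallyAdapted S μ)
    {H : Type*} [NormedAddCommGroup H] [InnerProductSpace ℝ H] [CompleteSpace H]
    (π : G →* (H ≃ₗᵢ[ℝ] H))
    (b : G → H) (hb : Continuous b)
    (hcoc : ∀ g h : G, b (g * h) = b g + π g (b h)) :
    Integrable b μ ∧ Integrable (fun g => ‖b g‖ ^ 2) μ := by
  have hb1 : b 1 = 0 := by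
    have h := hcoc 1 1
    simp only [one_mul, map_one, LinearIsometryEquiv.coe_one, id_eq] at h
    exact left_eq_add.mp h
  obtain ⟨C, hC⟩ := hScpt.exists_bound_of_continuousOn hb.continuousOn
  set M : ℝ := max C 0 with hM
  have hM0 : 0 ≤ M := le_max_right _ _
  have hMS : ∀ s ∈ S, ‖b s‖ ≤ M := fun s hs => (hC s hs).trans (le_max_left _ _)
  have hpow : ∀ n : ℕ, ∀ g ∈ S ^ n, ‖b g‖ ≤ M * n := by
    intro n
    induction n with
    | zero =>
      intro g hg
      rw [pow_zero, Set.mem_one] at hg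
      subst hg
      simp [hb1]
    | succ n ih =>
      intro g hg
      rw [pow_succ] at hg
      obtain ⟨a, ha, s, hs, rfl⟩ := hg
      rw [hcoc]
      calc ‖b a + (π a) (b s)‖ ≤ ‖b a‖ + ‖(π a) (b s)‖ := norm_add_le _ _
        _ = ‖b a‖ + ‖b s‖ := by rw [LinearIsometryEquiv.norm_map]
        _ ≤ M * n + M := add_le_add (ih a ha) (hMS s hs)
        _ = M * (n + 1 : ℕ) := by push_cast; ring
  have hbound : ∀ g : G, ‖b g‖ ≤ M * (wordLength S g : ℝ) := by
    intro g
    exact hpow _ g (Nat.sInf_mem (hSgen g))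
  have hm1 : Integrable (fun g => (wordLength S g : ℝ)) μ := by
    have h := hμ.finiteMoments 1 le_rfl
    simpa [Real.rpow_one] using h
  have hm2 : Integrable (fun g => (wordLength S g : ℝ) ^ 2) μ := by
    have h := hμ.finiteMoments 2 one_le_two
    have h2 : ∀ x : ℝ, x ^ (2 : ℝ) = x ^ 2 := fun x => by
      rw [show (2 : ℝ) = ((2 : ℕ) : ℝ) by norm_num, Real.rpow_natCast]
    simpa [h2] using h
  constructor
  · refine Integrable.mono' (hm1.const_mul M) hb.aestronglyMeasurable ?_
    exact Filter.Eventually.of_forall hbound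
  · refine Integrable.mono' (hm2.const_mul (M ^ 2))
      ((hb.norm.pow 2).aestronglyMeasurable) ?_
    refine Filter.Eventually.of_forall (fun g => ?_)
    have h1 : ‖b g‖ ^ 2 ≤ (M * (wordLength S g : ℝ)) ^ 2 :=
      pow_le_pow_left₀ (norm_nonneg _) (hbound g) 2
    calc ‖‖b g‖ ^ 2‖ = ‖b g‖ ^ 2 := by
          rw [Real.norm_eq_abs, abs_of_nonneg (sq_nonneg _)]
      _ ≤ (M * (wordLength S g : ℝ)) ^ 2 := h1
      _ = M ^ 2 * (wordLength S g : ℝ) ^ 2 := by ring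

open scoped RealInnerProductSpace in
/- STATEMENT 12: the convolution identity for 1-cocycles of unitary representations:
`‖b‖_{L²(μ∗ν)}² = ‖b‖_{L²(μ)}² + ‖b‖_{L²(ν)}² − 2⟪b(μ), b(ν)⟫`. -/
theorem cocycle_convolution_identity_hilbert
    {G : Type*} [Group G] [TopologicalSpace G] [IsTopologicalGroup G]
    [LocallyCompactSpace G] [SecondCountableTopology G]
    [MeasurableSpace G] [BorelSpace G]
    (S : Set G) (hScpt : IsCompact S) (hSsymm : S⁻¹ = S)
    (hSgen : ∀ g : G, ∃ n : ℕ, g ∈ S ^ n)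
    (μ ν : MeasureTheory.Measure G)
    (hμ : CohomologicallyAdapted S μ) (hν : CohomologicallyAdapted S ν)
    {H : Type*} [NormedAddCommGroup H] [InnerProductSpace ℝ H] [CompleteSpace H]
    (π : G →* (H ≃ₗᵢ[ℝ] H)) (hπ : ∀ x : H, Continuous fun g : G => π g x)
    (b : G → H) (hb : Continuous b)
    (hcoc : ∀ g h : G, b (g * h) = b g + π g (b h)) :
    ∫ g, ‖b g‖ ^ 2 ∂(mconv μ ν)
      = (∫ g, ‖b g‖ ^ 2 ∂μ) + (∫ g, ‖b g‖ ^ 2 ∂ν)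
        - 2 * ⟪∫ g, b g ∂μ, ∫ g, b g ∂ν⟫ := by
  classical
  open MeasureTheory in
  haveI : IsProbabilityMeasure μ := hμ.isProb
  haveI : IsProbabilityMeasure ν := hν.isProb
  obtain ⟨hbμ, hb2μ⟩ := cocycle_integrable_aux S hScpt hSgen μ hμ π b hb hcoc
  obtain ⟨hbν, hb2ν⟩ := cocycle_integrable_aux S hScpt hSgen ν hν π b hb hcoc
  have hb1 : b 1 = 0 := by
    have h := hcoc 1 1
    simp only [one_mul, map_one, LinearIsometryEquiv.coe_one, id_eq] at h
    exact left_eq_add.mp h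
  -- b g = -(π g) (b g⁻¹)
  have hneg : ∀ g : G, b g = -((π g) (b g⁻¹)) := by
    intro g
    have h := hcoc g g⁻¹
    rw [mul_inv_cancel, hb1] at h
    exact eq_neg_of_add_eq_zero_left h.symm
  -- cross term identity
  have hcross : ∀ g h : G, ⟪b g, (π g) (b h)⟫ = -⟪b g⁻¹, b h⟫ := by
    intro g h
    rw [hneg g, inner_neg_left, LinearIsometryEquiv.inner_map_map]
  -- integrability of g ↦ b g⁻¹
  have hbinvμ : Integrable (fun g => b g⁻¹) μ := by
    have h : Integrable b (Measure.map (fun g : G => g⁻¹) μ) := by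
      rw [hμ.symmetric]; exact hbμ
    exact (integrable_map_measure
      (by rw [hμ.symmetric]; exact hb.aestronglyMeasurable)
      measurable_inv.aemeasurable).mp h
  have hinvint : ∫ g, b g⁻¹ ∂μ = ∫ g, b g ∂μ := by
    conv_rhs => rw [← hμ.symmetric]
    rw [integral_map measurable_inv.aemeasurable
      (by rw [hμ.symmetric]; exact hb.aestronglyMeasurable)]
  -- push forward the convolution
  have hmap : ∫ g, ‖b g‖ ^ 2 ∂(mconv μ ν)
      = ∫ q : G × G, ‖b (q.1 * q.2)‖ ^ 2 ∂(μ.prod ν) := by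
    rw [mconv, integral_map (φ := fun q : G × G => q.1 * q.2) (f := fun g => ‖b g‖ ^ 2) (measurable_fst.mul measurable_snd).aemeasurable
      (hb.norm.pow 2).aestronglyMeasurable]
  -- pointwise expansion
  have hpt : ∀ q : G × G, ‖b (q.1 * q.2)‖ ^ 2
      = ‖b q.1‖ ^ 2 + ‖b q.2‖ ^ 2 - 2 * ⟪b q.1⁻¹, b q.2⟫ := by
    intro q
    rw [hcoc, norm_add_sq_real, LinearIsometryEquiv.norm_map, hcross]
    ring
  -- integrability on the product
  have If1 : Integrable (fun q : G × G => ‖b q.1‖ ^ 2) (μ.prod ν) := by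
    have h := hb2μ
    rw [← Measure.fst_prod (μ := μ) (ν := ν), Measure.fst] at h
    exact (integrable_map_measure (hb.norm.pow 2).aestronglyMeasurable
      measurable_fst.aemeasurable).mp h
  have If2 : Integrable (fun q : G × G => ‖b q.2‖ ^ 2) (μ.prod ν) := by
    have h := hb2ν
    rw [← Measure.snd_prod (μ := μ) (ν := ν), Measure.snd] at h
    exact (integrable_map_measure (hb.norm.pow 2).aestronglyMeasurable
      measurable_snd.aemeasurable).mp h
  have If3 : Integrable (fun q : G × G => ⟪b q.1⁻¹, b q.2⟫) (μ.prod ν) := by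
    have hdom : Integrable (fun q : G × G => ‖b q.1⁻¹‖ * ‖b q.2‖) (μ.prod ν) :=
      Integrable.mul_prod hbinvμ.norm hbν.norm
    refine Integrable.mono' hdom ?_ ?_
    · exact (Continuous.inner (hb.comp (continuous_fst.inv))
        (hb.comp continuous_snd)).aestronglyMeasurable
    · refine Filter.Eventually.of_forall (fun q => ?_)
      rw [Real.norm_eq_abs]
      exact abs_real_inner_le_norm _ _
  -- compute product-measure integrals
  have hI1 : ∫ q : G × G, ‖b q.1‖ ^ 2 ∂(μ.prod ν) = ∫ g, ‖b g‖ ^ 2 ∂μ := by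
    conv_rhs => rw [← Measure.fst_prod (μ := μ) (ν := ν), Measure.fst]
    rw [integral_map (f := fun g => ‖b g‖ ^ 2) measurable_fst.aemeasurable (hb.norm.pow 2).aestronglyMeasurable]
  have hI2 : ∫ q : G × G, ‖b q.2‖ ^ 2 ∂(μ.prod ν) = ∫ g, ‖b g‖ ^ 2 ∂ν := by
    conv_rhs => rw [← Measure.snd_prod (μ := μ) (ν := ν), Measure.snd]
    rw [integral_map (f := fun g => ‖b g‖ ^ 2) measurable_snd.aemeasurable (hb.norm.pow 2).aestronglyMeasurable]
  have hI3 : ∫ q : G × G, ⟪b q.1⁻¹, b q.2⟫ ∂(μ.prod ν)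
      = ⟪∫ g, b g ∂μ, ∫ g, b g ∂ν⟫ := by
    rw [MeasureTheory.integral_prod _ If3]
    have hinner : ∀ g : G, ∫ h, ⟪b g⁻¹, b h⟫ ∂ν = ⟪b g⁻¹, ∫ h, b h ∂ν⟫ :=
      fun g => integral_inner hbν _
    simp_rw [hinner]
    have hswap : ∀ g : G, ⟪b g⁻¹, ∫ h, b h ∂ν⟫ = ⟪∫ h, b h ∂ν, b g⁻¹⟫ :=
      fun g => real_inner_comm _ _
    simp_rw [hswap]
    rw [integral_inner hbinvμ, hinvint, real_inner_comm]
  rw [hmap]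
  calc ∫ q : G × G, ‖b (q.1 * q.2)‖ ^ 2 ∂(μ.prod ν)
      = ∫ q : G × G, (‖b q.1‖ ^ 2 + ‖b q.2‖ ^ 2 - 2 * ⟪b q.1⁻¹, b q.2⟫)
          ∂(μ.prod ν) := by
        exact integral_congr_ae (Filter.Eventually.of_forall hpt)
    _ = (∫ q : G × G, ‖b q.1‖ ^ 2 ∂(μ.prod ν))
          + (∫ q : G × G, ‖b q.2‖ ^ 2 ∂(μ.prod ν))
          - 2 * ∫ q : G × G, ⟪b q.1⁻¹, b q.2⟫ ∂(μ.prod ν) := by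
        have Ifsum : Integrable (fun q : G × G => ‖b q.1‖ ^ 2 + ‖b q.2‖ ^ 2)
            (μ.prod ν) := If1.add If2
        have If3' : Integrable (fun q : G × G => 2 * ⟪b q.1⁻¹, b q.2⟫)
            (μ.prod ν) := If3.const_mul 2
        rw [integral_sub Ifsum If3', integral_add If1 If2, MeasureTheory.integral_const_mul]
    _ = (∫ g, ‖b g‖ ^ 2 ∂μ) + (∫ g, ‖b g‖ ^ 2 ∂ν)
          - 2 * ⟪∫ g, b g ∂μ, ∫ g, b g ∂ν⟫ := by
        rw [hI1, hI2, hI3]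
end
end

section
/- Let G be a locally compact second countable, compactly generated group with compact symmetric generating set S, and let μ be a cohomologically adapted probability measure on G. Let H be a real Hilbert space, π : G → O(H) a strongly continuous representation by surjective linear isometries, and b ∈ Z¹(G, π) a 1-cocycle. Then for every n ≥ 1: (∫_G ‖b(g)‖² dμ^{*n}(g))^{1/2} ≤ √n · (∫_G ‖b(g)‖² dμ(g))^{1/2}, and equality holds for all n ≥ 1 if and only if b is μ-harmonic, i.e. ∫_G b(g) dμ(g) = 0. -/
open Pointwise
open scoped ENNReal

noncomputable section

section Helpers

open MeasureTheory
open scoped RealInnerProductSpace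

variable {G : Type*} [Group G] [TopologicalSpace G] [IsTopologicalGroup G]
  [SecondCountableTopology G] [MeasurableSpace G] [BorelSpace G]

lemma convPow_isProb (μ : MeasureTheory.Measure G) [IsProbabilityMeasure μ] (n : ℕ) :
    IsProbabilityMeasure (convPow μ n) := by
  induction n with
  | zero => exact Measure.dirac.isProbabilityMeasure
  | succ n ih =>
    show IsProbabilityMeasure (Measure.map _ _)
    haveI := ih
    exact Measure.isProbabilityMeasure_map measurable_mul.aemeasurable

lemma integral_convPow_succ {E : Type*} [NormedAddCommGroup E] [NormedSpace ℝ E]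
    (μ : MeasureTheory.Measure G) (n : ℕ) {f : G → E} (hf : Continuous f) :
    ∫ g, f g ∂(convPow μ (n + 1))
      = ∫ q : G × G, f (q.1 * q.2) ∂((convPow μ n).prod μ) := by
  show (∫ g, f g ∂(MeasureTheory.Measure.map _ _)) = _
  exact integral_map measurable_mul.aemeasurable hf.aestronglyMeasurable

lemma integrable_convPow_succ {E : Type*} [NormedAddCommGroup E]
    (μ : MeasureTheory.Measure G) (n : ℕ) {f : G → E} (hf : Continuous f) :
    Integrable f (convPow μ (n + 1))
      ↔ Integrable (fun q : G × G => f (q.1 * q.2)) ((convPow μ n).prod μ) := by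
  show Integrable f (MeasureTheory.Measure.map _ _) ↔ _
  exact integrable_map_measure hf.aestronglyMeasurable measurable_mul.aemeasurable

lemma integrable_dirac_of_continuous {E : Type*} [NormedAddCommGroup E]
    {f : G → E} (hf : Continuous f) (a : G) :
    Integrable f (MeasureTheory.Measure.dirac a) := by
  refine ⟨hf.aestronglyMeasurable, ?_⟩
  have h : (∫⁻ x, ‖f x‖ₑ ∂MeasureTheory.Measure.dirac a) = ‖f a‖ₑ :=
    lintegral_dirac' a (continuous_enorm.comp hf).measurable
  rw [HasFiniteIntegral, h]
  exact enorm_lt_top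

end Helpers

/- STATEMENT 13: `‖b‖_{L²(μ^{*n})} ≤ √n·‖b‖_{L²(μ)}` for any 1-cocycle of a unitary
representation, with equality for all `n ≥ 1` if and only if `b` is `μ`-harmonic. -/
set_option maxHeartbeats 1000000 in
theorem cocycle_sqrt_growth_hilbert
    {G : Type*} [Group G] [TopologicalSpace G] [IsTopologicalGroup G]
    [LocallyCompactSpace G] [SecondCountableTopology G]
    [MeasurableSpace G] [BorelSpace G]
    (S : Set G) (hScpt : IsCompact S) (hSsymm : S⁻¹ = S)
    (hSgen : ∀ g : G, ∃ n : ℕ, g ∈ S ^ n)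
    (μ : MeasureTheory.Measure G) (hμ : CohomologicallyAdapted S μ)
    {H : Type*} [NormedAddCommGroup H] [InnerProductSpace ℝ H] [CompleteSpace H]
    (π : G →* (H ≃ₗᵢ[ℝ] H)) (hπ : ∀ x : H, Continuous fun g : G => π g x)
    (b : G → H) (hb : Continuous b)
    (hcoc : ∀ g h : G, b (g * h) = b g + π g (b h)) :
    (∀ n : ℕ, 1 ≤ n →
      (∫ g, ‖b g‖ ^ 2 ∂(convPow μ n)) ^ ((1 : ℝ) / 2)
        ≤ Real.sqrt n * (∫ g, ‖b g‖ ^ 2 ∂μ) ^ ((1 : ℝ) / 2)) ∧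
    ((∀ n : ℕ, 1 ≤ n →
      (∫ g, ‖b g‖ ^ 2 ∂(convPow μ n)) ^ ((1 : ℝ) / 2)
        = Real.sqrt n * (∫ g, ‖b g‖ ^ 2 ∂μ) ^ ((1 : ℝ) / 2)) ↔
      ∫ g, b g ∂μ = 0) := by
  open MeasureTheory in
  open scoped RealInnerProductSpace in
  haveI : IsProbabilityMeasure μ := hμ.isProb
  -- notation
  set ν : ℕ → MeasureTheory.Measure G := convPow μ with hν
  haveI hprob : ∀ n, IsProbabilityMeasure (ν n) := convPow_isProb μ
  -- basic algebra of the cocycle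
  have hb1 : b 1 = 0 := by
    have h := hcoc 1 1
    rw [mul_one] at h
    have : π 1 (b 1) = 0 := by
      have := (left_eq_add).mp h
      exact this
    simpa using this
  have hππ : ∀ (g : G) (y : H), π g (π g⁻¹ y) = y := by
    intro g y
    have h : π g * π g⁻¹ = 1 := by rw [← map_mul, mul_inv_cancel, map_one]
    calc π g (π g⁻¹ y) = (π g * π g⁻¹) y := rfl
      _ = y := by rw [h]; rfl
  have hππ' : ∀ (g : G) (y : H), π g⁻¹ (π g y) = y := by
    intro g y
    have := hππ g⁻¹ y
    rwa [inv_inv] at this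
  have hbinv : ∀ g : G, b g⁻¹ = -(π g⁻¹ (b g)) := by
    intro g
    have h := hcoc g⁻¹ g
    rw [inv_mul_cancel, hb1] at h
    exact eq_neg_of_add_eq_zero_left h.symm
  -- bound ‖b g‖ ≤ M * |g|_S
  obtain ⟨C, hC⟩ := hScpt.exists_bound_of_continuousOn hb.continuousOn
  set M : ℝ := max C 0 with hM
  have hMnn : (0:ℝ) ≤ M := le_max_right _ _
  have hMS : ∀ s ∈ S, ‖b s‖ ≤ M := fun s hs => (hC s hs).trans (le_max_left _ _)
  have hpow : ∀ n : ℕ, ∀ g ∈ S ^ n, ‖b g‖ ≤ n * M := by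
    intro n
    induction n with
    | zero =>
      intro g hg
      rw [pow_zero, Set.mem_one] at hg
      subst hg
      simp [hb1]
    | succ n ih =>
      intro g hg
      rw [pow_succ] at hg
      obtain ⟨x, hx, s, hs, rfl⟩ := hg
      rw [hcoc]
      calc ‖b x + π x (b s)‖ ≤ ‖b x‖ + ‖π x (b s)‖ := norm_add_le _ _
        _ ≤ n * M + M := by
            rw [LinearIsometryEquiv.norm_map]
            exact add_le_add (ih x hx) (hMS s hs)
        _ = (↑(n+1)) * M := by push_cast; ring
  have hword : ∀ g : G, ‖b g‖ ≤ M * (wordLength S g : ℝ) := by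
    intro g
    have hne : {n : ℕ | g ∈ S ^ n}.Nonempty := hSgen g
    have hmem : g ∈ S ^ (wordLength S g) := Nat.sInf_mem hne
    calc ‖b g‖ ≤ (wordLength S g : ℝ) * M := hpow _ g hmem
      _ = M * (wordLength S g : ℝ) := mul_comm _ _
  have hL2mu : Integrable (fun g => ‖b g‖ ^ 2) μ := by
    have hmom := hμ.finiteMoments 2 (by norm_num)
    have heq : (fun g => (wordLength S g : ℝ) ^ (2:ℝ))
        = fun g => (wordLength S g : ℝ) ^ (2:ℕ) := by
      funext g
      rw [show (2:ℝ) = ((2:ℕ):ℝ) by norm_num, Real.rpow_natCast]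
    rw [heq] at hmom
    refine Integrable.mono' (hmom.const_mul (M^2)) ((hb.norm.pow 2).aestronglyMeasurable) ?_
    refine Filter.Eventually.of_forall fun g => ?_
    have h1 := hword g
    have h0 : (0:ℝ) ≤ ‖b g‖ := norm_nonneg _
    calc ‖‖b g‖ ^ 2‖ = ‖b g‖ ^ 2 := by
          rw [Real.norm_eq_abs, abs_of_nonneg (sq_nonneg _)]
      _ ≤ M ^ 2 * (wordLength S g : ℝ) ^ 2 := by nlinarith
  have hL1nmu : Integrable (fun g => ‖b g‖) μ := by
    refine Integrable.mono' ((integrable_const (1:ℝ)).add hL2mu) hb.norm.aestronglyMeasurable ?_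
    refine Filter.Eventually.of_forall fun g => ?_
    have h0 : (0:ℝ) ≤ ‖b g‖ := norm_nonneg _
    calc ‖‖b g‖‖ = ‖b g‖ := by rw [Real.norm_eq_abs, abs_of_nonneg h0]
      _ ≤ 1 + ‖b g‖ ^ 2 := by nlinarith
  have hL1mu : Integrable b μ := (integrable_norm_iff hb.aestronglyMeasurable).mp hL1nmu
  -- integrability w.r.t. convolution powers, by induction
  have hL2 : ∀ n, Integrable (fun g => ‖b g‖ ^ 2) (ν n) := by
    intro n
    induction n with
    | zero => exact integrable_dirac_of_continuous (hb.norm.pow 2) 1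
    | succ n ih =>
      haveI := hprob n
      rw [hν, integrable_convPow_succ μ n (f := fun g => ‖b g‖ ^ 2) (hb.norm.pow 2)]
      have hdom : Integrable
          (fun q : G × G => 2 * ‖b q.1‖ ^ 2 + 2 * ‖b q.2‖ ^ 2) ((ν n).prod μ) := by
        refine Integrable.add ?_ ?_
        · simpa using ((ih.const_mul 2).mul_prod (integrable_const (1:ℝ)))
        · simpa using ((integrable_const (1:ℝ)).mul_prod (hL2mu.const_mul 2))
      refine Integrable.mono' hdom
        (((hb.comp continuous_mul).norm.pow 2).aestronglyMeasurable) ?_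
      refine Filter.Eventually.of_forall fun q => ?_
      have h1 : ‖b (q.1 * q.2)‖ ≤ ‖b q.1‖ + ‖b q.2‖ := by
        rw [hcoc]
        calc ‖b q.1 + π q.1 (b q.2)‖ ≤ ‖b q.1‖ + ‖π q.1 (b q.2)‖ := norm_add_le _ _
          _ = ‖b q.1‖ + ‖b q.2‖ := by rw [LinearIsometryEquiv.norm_map]
      have h0 : (0:ℝ) ≤ ‖b (q.1 * q.2)‖ := norm_nonneg _
      calc ‖‖b (q.1 * q.2)‖ ^ 2‖ = ‖b (q.1 * q.2)‖ ^ 2 := by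
            rw [Real.norm_eq_abs, abs_of_nonneg (sq_nonneg _)]
        _ ≤ 2 * ‖b q.1‖ ^ 2 + 2 * ‖b q.2‖ ^ 2 := by
            nlinarith [h1, h0, sq_nonneg (‖b q.1‖ - ‖b q.2‖), norm_nonneg (b q.1), norm_nonneg (b q.2)]
  have hL1n : ∀ n, Integrable (fun g => ‖b g‖) (ν n) := by
    intro n
    haveI := hprob n
    refine Integrable.mono' ((integrable_const (1:ℝ)).add (hL2 n)) hb.norm.aestronglyMeasurable ?_
    refine Filter.Eventually.of_forall fun g => ?_
    have h0 : (0:ℝ) ≤ ‖b g‖ := norm_nonneg _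
    calc ‖‖b g‖‖ = ‖b g‖ := by rw [Real.norm_eq_abs, abs_of_nonneg h0]
      _ ≤ 1 + ‖b g‖ ^ 2 := by nlinarith
  -- the barycenter B and the Markov operator P
  set B : H := ∫ g, b g ∂μ with hB
  set P : H → H := fun x => ∫ g, π g x ∂μ with hP
  have hPint : ∀ x : H, Integrable (fun g => π g x) μ := by
    intro x
    refine Integrable.mono' (integrable_const ‖x‖) (hπ x).aestronglyMeasurable ?_
    exact Filter.Eventually.of_forall fun g => le_of_eq (LinearIsometryEquiv.norm_map _ _)
  have hPnorm : ∀ x : H, ‖P x‖ ≤ ‖x‖ := by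
    intro x
    calc ‖P x‖ ≤ ∫ g, ‖π g x‖ ∂μ := norm_integral_le_integral_norm _
      _ = ∫ (_ : G), ‖x‖ ∂μ := by
          congr 1
          funext g
          exact LinearIsometryEquiv.norm_map _ _
      _ = ‖x‖ := by simp
  -- change of variables g ↦ g⁻¹ under μ
  have hsym : ∀ f : G → ℝ, Continuous f → (∫ g, f g⁻¹ ∂μ) = ∫ g, f g ∂μ := by
    intro f hf
    conv_rhs => rw [← hμ.symmetric]
    rw [integral_map measurable_inv.aemeasurable hf.aestronglyMeasurable]
  have hshiftinner : ∀ (g : G) (y x : H), ⟪y, π g⁻¹ x⟫ = ⟪π g y, x⟫ := by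
    intro g y x
    conv_rhs => rw [← hππ g x]
    rw [LinearIsometryEquiv.inner_map_map]
  have hPsa : ∀ x y : H, ⟪P x, y⟫ = ⟪x, P y⟫ := by
    intro x y
    have h1 : ⟪P x, y⟫ = ∫ g, ⟪y, π g x⟫ ∂μ := by
      rw [real_inner_comm, ← integral_inner (hPint x) y]
    have h2 : ⟪x, P y⟫ = ∫ g, ⟪x, π g y⟫ ∂μ := (integral_inner (hPint y) x).symm
    rw [h1, h2, ← hsym (fun g => ⟪y, π g x⟫) ((continuous_const).inner (hπ x))]
    congr 1
    funext g
    rw [hshiftinner g y x, real_inner_comm]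
  -- the fundamental one-step identity ∫ ⟪b g, π g x⟫ dμ = -⟪B, x⟫
  have hC1 : ∀ x : H, (∫ g, ⟪b g, π g x⟫ ∂μ) = -⟪B, x⟫ := by
    intro x
    have hcont : Continuous fun g : G => ⟪b g, π g x⟫ := hb.inner (hπ x)
    rw [← hsym _ hcont]
    have heq : ∀ g : G, ⟪b g⁻¹, π g⁻¹ x⟫ = -⟪x, b g⟫ := by
      intro g
      rw [hbinv g, inner_neg_left, LinearIsometryEquiv.inner_map_map, real_inner_comm]
    calc (∫ g, ⟪b g⁻¹, π g⁻¹ x⟫ ∂μ) = ∫ g, -⟪x, b g⟫ ∂μ := by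
          congr 1; funext g; exact heq g
      _ = -∫ g, ⟪x, b g⟫ ∂μ := integral_neg _
      _ = -⟪B, x⟫ := by rw [integral_inner hL1mu x, real_inner_comm]
  -- joint continuity data
  have hbmul : Continuous fun q : G × G => b (q.1 * q.2) := hb.comp continuous_mul
  have hfst : Continuous fun q : G × G => b q.1 := hb.comp continuous_fst
  -- the n-step identity
  have hCn : ∀ (n : ℕ) (x : H),
      (∫ g, ⟪b g, π g x⟫ ∂ν n) = -∑ k ∈ Finset.range n, ⟪B, P^[k] x⟫ := by
    intro n
    induction n with
    | zero =>
      intro x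
      have h0 : (∫ g, ⟪b g, π g x⟫ ∂ν 0) = ⟪b 1, π 1 x⟫ :=
        integral_dirac' _ 1 (hb.inner (hπ x)).stronglyMeasurable
      rw [h0]
      simp [hb1]
    | succ n ih =>
      intro x
      haveI := hprob n
      have hcont : Continuous fun g : G => ⟪b g, π g x⟫ := hb.inner (hπ x)
      rw [hν, integral_convPow_succ μ n hcont]
      have hpt : ∀ q : G × G, ⟪b (q.1 * q.2), π (q.1 * q.2) x⟫
          = ⟪b q.1, π q.1 (π q.2 x)⟫ + ⟪b q.2, π q.2 x⟫ := by
        intro q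
        rw [hcoc, map_mul π]
        have h1 : (π q.1 * π q.2) x = π q.1 (π q.2 x) := rfl
        rw [h1, inner_add_left, LinearIsometryEquiv.inner_map_map]
      have J1 : Integrable (fun q : G × G => ⟪b q.1, π q.1 (π q.2 x)⟫) ((ν n).prod μ) := by
        have hconteq : (fun q : G × G => ⟪b q.1, π q.1 (π q.2 x)⟫)
            = fun q : G × G => ⟪b q.1, π (q.1 * q.2) x⟫ := by
          funext q; rw [map_mul π]; rfl
        refine Integrable.mono'
          (by simpa using ((hL1n n).mul_prod (integrable_const ‖x‖))) ?_ ?_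
        · rw [hconteq]
          exact (hfst.inner ((hπ x).comp continuous_mul)).aestronglyMeasurable
        · refine Filter.Eventually.of_forall fun q => ?_
          calc ‖⟪b q.1, π q.1 (π q.2 x)⟫‖ ≤ ‖b q.1‖ * ‖π q.1 (π q.2 x)‖ := by
                rw [Real.norm_eq_abs]; exact abs_real_inner_le_norm _ _
            _ = ‖b q.1‖ * ‖x‖ := by
                rw [LinearIsometryEquiv.norm_map, LinearIsometryEquiv.norm_map]
      have J2 : Integrable (fun q : G × G => ⟪b q.2, π q.2 x⟫) ((ν n).prod μ) := by
        refine Integrable.mono'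
          (by simpa using ((integrable_const (1:ℝ)).mul_prod (hL1nmu.mul_const ‖x‖))) ?_ ?_
        · exact ((hb.comp continuous_snd).inner ((hπ x).comp continuous_snd)).aestronglyMeasurable
        · refine Filter.Eventually.of_forall fun q => ?_
          calc ‖⟪b q.2, π q.2 x⟫‖ ≤ ‖b q.2‖ * ‖π q.2 x‖ := by
                rw [Real.norm_eq_abs]; exact abs_real_inner_le_norm _ _
            _ = ‖b q.2‖ * ‖x‖ := by rw [LinearIsometryEquiv.norm_map]
      have hsplit : (∫ q : G × G, ⟪b (q.1 * q.2), π (q.1 * q.2) x⟫ ∂((ν n).prod μ))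
          = (∫ q : G × G, ⟪b q.1, π q.1 (π q.2 x)⟫ ∂((ν n).prod μ))
            + ∫ q : G × G, ⟪b q.2, π q.2 x⟫ ∂((ν n).prod μ) := by
        rw [← integral_add J1 J2]
        congr 1
        funext q
        exact hpt q
      have hI1 : (∫ q : G × G, ⟪b q.1, π q.1 (π q.2 x)⟫ ∂((ν n).prod μ))
          = -∑ k ∈ Finset.range n, ⟪B, P^[k] (P x)⟫ := by
        rw [integral_prod _ J1]
        have hinner : ∀ g : G, (∫ h, ⟪b g, π g (π h x)⟫ ∂μ) = ⟪b g, π g (P x)⟫ := by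
          intro g
          have hint : Integrable (fun h : G => π g (π h x)) μ :=
            ((π g : H →L[ℝ] H)).integrable_comp (hPint x)
          rw [integral_inner hint (b g)]
          congr 1
          exact ((π g : H →L[ℝ] H)).integral_comp_comm (hPint x)
        calc (∫ g, ∫ h, ⟪b ((g, h) : G × G).1, π (g, h).1 (π (g, h).2 x)⟫ ∂μ ∂ν n)
            = ∫ g, ⟪b g, π g (P x)⟫ ∂ν n := by
              congr 1; funext g; exact hinner g
          _ = -∑ k ∈ Finset.range n, ⟪B, P^[k] (P x)⟫ := ih (P x)
      have hI2 : (∫ q : G × G, ⟪b q.2, π q.2 x⟫ ∂((ν n).prod μ)) = -⟪B, x⟫ := by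
        rw [integral_prod _ J2]
        calc (∫ _, ∫ h, ⟪b h, π h x⟫ ∂μ ∂ν n) = ∫ _, (-⟪B, x⟫ : ℝ) ∂ν n := by
              congr 1; funext g; exact hC1 x
          _ = -⟪B, x⟫ := by simp
      rw [hsplit, hI1, hI2, Finset.sum_range_succ' (fun k => ⟪B, P^[k] x⟫) n]
      have hit : ∀ k, P^[k+1] x = P^[k] (P x) := fun k => Function.iterate_succ_apply P k x
      simp only [hit, Function.iterate_zero_apply]
      ring
  -- the energy sequence and its recursion
  set Eseq : ℕ → ℝ := fun n => ∫ g, ‖b g‖ ^ 2 ∂ν n with hE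
  set Emu : ℝ := ∫ g, ‖b g‖ ^ 2 ∂μ with hEmu
  have hrec : ∀ n : ℕ, Eseq (n + 1) = Eseq n + Emu + 2 * ∫ g, ⟪b g, π g B⟫ ∂ν n := by
    intro n
    haveI := hprob n
    have hpt : ∀ q : G × G, ‖b (q.1 * q.2)‖ ^ 2
        = ‖b q.1‖ ^ 2 + 2 * ⟪b q.1, π q.1 (b q.2)⟫ + ‖b q.2‖ ^ 2 := by
      intro q
      rw [hcoc, norm_add_sq_real, LinearIsometryEquiv.norm_map]
    have I1 : Integrable (fun q : G × G => ‖b q.1‖ ^ 2) ((ν n).prod μ) := by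
      simpa using ((hL2 n).mul_prod (integrable_const (1:ℝ)))
    have I3 : Integrable (fun q : G × G => ‖b q.2‖ ^ 2) ((ν n).prod μ) := by
      simpa using ((integrable_const (1:ℝ)).mul_prod hL2mu)
    have I2 : Integrable (fun q : G × G => ⟪b q.1, π q.1 (b q.2)⟫) ((ν n).prod μ) := by
      have hconteq : (fun q : G × G => ⟪b q.1, π q.1 (b q.2)⟫)
          = fun q : G × G => ⟪b q.1, b (q.1 * q.2) - b q.1⟫ := by
        funext q
        have : π q.1 (b q.2) = b (q.1 * q.2) - b q.1 := by rw [hcoc]; abel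
        rw [this]
      refine Integrable.mono' ((hL1n n).mul_prod hL1nmu) ?_ ?_
      · rw [hconteq]
        exact (hfst.inner (hbmul.sub hfst)).aestronglyMeasurable
      · refine Filter.Eventually.of_forall fun q => ?_
        calc ‖⟪b q.1, π q.1 (b q.2)⟫‖ ≤ ‖b q.1‖ * ‖π q.1 (b q.2)‖ := by
              rw [Real.norm_eq_abs]; exact abs_real_inner_le_norm _ _
          _ = ‖b q.1‖ * ‖b q.2‖ := by rw [LinearIsometryEquiv.norm_map]
    have hmap : Eseq (n + 1) = ∫ q : G × G, ‖b (q.1 * q.2)‖ ^ 2 ∂((ν n).prod μ) := by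
      rw [hE]
      exact integral_convPow_succ μ n (hb.norm.pow 2)
    have hsplit : (∫ q : G × G, ‖b (q.1 * q.2)‖ ^ 2 ∂((ν n).prod μ))
        = (∫ q : G × G, ‖b q.1‖ ^ 2 ∂((ν n).prod μ))
          + 2 * (∫ q : G × G, ⟪b q.1, π q.1 (b q.2)⟫ ∂((ν n).prod μ))
          + ∫ q : G × G, ‖b q.2‖ ^ 2 ∂((ν n).prod μ) := by
      calc (∫ q : G × G, ‖b (q.1 * q.2)‖ ^ 2 ∂((ν n).prod μ))
          = ∫ q : G × G, (‖b q.1‖ ^ 2 + 2 * ⟪b q.1, π q.1 (b q.2)⟫ + ‖b q.2‖ ^ 2)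
              ∂((ν n).prod μ) := by
            congr 1; funext q; exact hpt q
        _ = (∫ q : G × G, (‖b q.1‖ ^ 2 + 2 * ⟪b q.1, π q.1 (b q.2)⟫) ∂((ν n).prod μ))
              + ∫ q : G × G, ‖b q.2‖ ^ 2 ∂((ν n).prod μ) :=
            integral_add (I1.add (I2.const_mul 2)) I3
        _ = (∫ q : G × G, ‖b q.1‖ ^ 2 ∂((ν n).prod μ))
              + 2 * (∫ q : G × G, ⟪b q.1, π q.1 (b q.2)⟫ ∂((ν n).prod μ))
              + ∫ q : G × G, ‖b q.2‖ ^ 2 ∂((ν n).prod μ) := by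
            rw [integral_add I1 (I2.const_mul 2), integral_const_mul]
    have hA : (∫ q : G × G, ‖b q.1‖ ^ 2 ∂((ν n).prod μ)) = Eseq n := by
      rw [integral_prod _ I1]
      simp
      rfl
    have hCc : (∫ q : G × G, ‖b q.2‖ ^ 2 ∂((ν n).prod μ)) = Emu := by
      rw [integral_prod _ I3]
      simp
      rfl
    have hBB : (∫ q : G × G, ⟪b q.1, π q.1 (b q.2)⟫ ∂((ν n).prod μ))
        = ∫ g, ⟪b g, π g B⟫ ∂ν n := by
      rw [integral_prod _ I2]
      congr 1
      funext g
      have hint : Integrable (fun h : G => π g (b h)) μ :=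
        ((π g : H →L[ℝ] H)).integrable_comp hL1mu
      rw [integral_inner hint (b g)]
      congr 1
      exact ((π g : H →L[ℝ] H)).integral_comp_comm hL1mu
    rw [hmap, hsplit, hA, hCc, hBB]
    ring
  -- self-adjointness of iterates and positivity of the partial sums
  have hshift : ∀ (k : ℕ) (x y : H), ⟪P^[k] x, y⟫ = ⟪x, P^[k] y⟫ := by
    intro k
    induction k with
    | zero => intro x y; simp
    | succ k ih =>
      intro x y
      rw [Function.iterate_succ_apply, ih (P x) y, hPsa x (P^[k] y),
        ← Function.iterate_succ_apply' P k y]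
  have hterm_even : ∀ j : ℕ, ⟪B, P^[2 * j] B⟫ = ‖P^[j] B‖ ^ 2 := by
    intro j
    rw [two_mul, Function.iterate_add_apply, ← hshift j B (P^[j] B),
      real_inner_self_eq_norm_sq]
  have hterm_odd : ∀ j : ℕ, -(‖P^[j] B‖ ^ 2) ≤ ⟪B, P^[2 * j + 1] B⟫ := by
    intro j
    have h1 : P^[2 * j + 1] B = P^[j] (P^[j + 1] B) := by
      rw [← Function.iterate_add_apply]
      congr 1
      ring
    rw [h1, ← hshift j B (P^[j+1] B), Function.iterate_succ_apply' P j B]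
    have h2 : |⟪P^[j] B, P (P^[j] B)⟫| ≤ ‖P^[j] B‖ * ‖P (P^[j] B)‖ :=
      abs_real_inner_le_norm _ _
    have h3 : ‖P (P^[j] B)‖ ≤ ‖P^[j] B‖ := hPnorm _
    have h4 : (0:ℝ) ≤ ‖P^[j] B‖ := norm_nonneg _
    nlinarith [abs_nonneg (⟪P^[j] B, P (P^[j] B)⟫), neg_abs_le (⟪P^[j] B, P (P^[j] B)⟫)]
  set Sm : ℕ → ℝ := fun n => ∑ k ∈ Finset.range n, ⟪B, P^[k] B⟫ with hSm
  have hSeven : ∀ j : ℕ, 0 ≤ Sm (2 * j) := by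
    intro j
    induction j with
    | zero => simp [hSm]
    | succ j ih =>
      have h1 : 2 * (j + 1) = (2 * j + 1) + 1 := by ring
      have h2 : Sm (2 * (j + 1)) = Sm (2 * j) + ⟪B, P^[2 * j] B⟫ + ⟪B, P^[2 * j + 1] B⟫ := by
        rw [hSm]
        simp only [h1]
        rw [Finset.sum_range_succ, Finset.sum_range_succ]
      rw [h2, hterm_even j]
      have := hterm_odd j
      nlinarith
  have hSnonneg : ∀ n : ℕ, 0 ≤ Sm n := by
    intro n
    rcases Nat.even_or_odd n with ⟨j, hj⟩ | ⟨j, hj⟩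
    · have : n = 2 * j := by omega
      rw [this]; exact hSeven j
    · have h2 : Sm n = Sm (2 * j) + ⟪B, P^[2 * j] B⟫ := by
        rw [hSm]
        simp only [hj]
        rw [Finset.sum_range_succ]
      rw [h2, hterm_even j]
      have := hSeven j
      nlinarith [sq_nonneg ‖P^[j] B‖]
  -- the recursion expressed through Sm
  have hrec' : ∀ n : ℕ, Eseq (n + 1) = Eseq n + Emu - 2 * Sm n := by
    intro n
    rw [hrec n, hCn n B]
    ring
  have hE0 : Eseq 0 = 0 := by
    have h0 : Eseq 0 = ‖b 1‖ ^ 2 :=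
      integral_dirac' _ 1 (hb.norm.pow 2).stronglyMeasurable
    rw [h0, hb1]
    simp
  have hEle : ∀ n : ℕ, Eseq n ≤ n * Emu := by
    intro n
    induction n with
    | zero => simp [hE0]
    | succ n ih =>
      have h1 := hrec' n
      have h2 := hSnonneg n
      calc Eseq (n + 1) ≤ Eseq n + Emu := by rw [h1]; linarith
        _ ≤ n * Emu + Emu := by linarith
        _ = (↑(n + 1) : ℝ) * Emu := by push_cast; ring
  have hEnonneg : ∀ n : ℕ, 0 ≤ Eseq n := fun n => integral_nonneg fun g => sq_nonneg _
  have hEmunonneg : 0 ≤ Emu := integral_nonneg fun g => sq_nonneg _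
  -- arithmetic with rpow
  have hfact : ∀ n : ℕ, ((n : ℝ) * Emu) ^ ((1:ℝ)/2) = Real.sqrt n * Emu ^ ((1:ℝ)/2) := by
    intro n
    rw [Real.mul_rpow (by positivity) hEmunonneg, Real.sqrt_eq_rpow]
  refine ⟨?_, ?_, ?_⟩
  · intro n _
    calc (Eseq n) ^ ((1:ℝ)/2) ≤ ((n : ℝ) * Emu) ^ ((1:ℝ)/2) :=
        Real.rpow_le_rpow (hEnonneg n) (hEle n) (by norm_num)
      _ = Real.sqrt n * Emu ^ ((1:ℝ)/2) := hfact n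
  · -- equality for all n ≥ 1 implies harmonicity
    intro heq
    have h2 := heq 2 (by norm_num)
    have h2' : (Eseq 2) ^ ((1:ℝ)/2) = ((2:ℝ) * Emu) ^ ((1:ℝ)/2) := by
      rw [h2, ← hfact 2]
      norm_num
    have hE2 : Eseq 2 = 2 * Emu := by
      have hsq := congrArg (fun t : ℝ => t ^ (2:ℝ)) h2'
      rw [← Real.rpow_mul (hEnonneg 2), ← Real.rpow_mul (by positivity)] at hsq
      norm_num at hsq
      exact hsq
    have hS1 : Sm 1 = ⟪B, B⟫ := by
      rw [hSm]
      simp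
    have hE1 : Eseq 1 = Emu := by
      rw [hrec' 0, hE0, hSm]
      simp
    have hr1 : Eseq 2 = Eseq 1 + Emu - 2 * Sm 1 := hrec' 1
    have hBB : ⟪B, B⟫ = (0:ℝ) := by
      rw [hS1, hE1, hE2] at hr1
      linarith
    exact inner_self_eq_zero.mp hBB
  · -- harmonicity implies equality for all n
    intro hB0 n _
    have hSz : ∀ m : ℕ, Sm m = 0 := by
      intro m
      rw [hSm]
      refine Finset.sum_eq_zero fun k _ => ?_
      rw [show B = (0:H) from hB0]
      simp
    have hEeq : ∀ m : ℕ, Eseq m = m * Emu := by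
      intro m
      induction m with
      | zero => simp [hE0]
      | succ m ih =>
        rw [hrec' m, hSz m, ih]
        push_cast
        ring
    rw [show (∫ g, ‖b g‖ ^ 2 ∂(convPow μ n)) = Eseq n from rfl, hEeq n, hfact n]
end
end

section
/- Let H be a real Hilbert space and A : H → H a continuous linear operator with operator norm ‖A‖ ≤ 1 which is self-adjoint (⟪Ax, y⟫ = ⟪x, Ay⟫ for all x, y ∈ H). Then for every ξ ∈ H and every integer n ≥ 1: ⟪ Σ_{j=0}^{n−2} (n−1−j)·A^j ξ, ξ ⟫ ≥ 0 (the sum being empty, hence zero, for n = 1). -/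
open scoped RealInnerProductSpace

/- STATEMENT 14: if `A` is a self-adjoint operator of norm at most `1` on a real
Hilbert space, then `⟪Σ_{j=0}^{n−2} (n−1−j)·A^j ξ, ξ⟫ ≥ 0` for every `ξ` and `n ≥ 1`. -/
theorem selfAdjoint_contraction_positivity
    {H : Type*} [NormedAddCommGroup H] [InnerProductSpace ℝ H] [CompleteSpace H]
    (A : H →L[ℝ] H) (hA : ‖A‖ ≤ 1)
    (hsa : ∀ x y : H, ⟪A x, y⟫ = ⟪x, A y⟫)
    (ξ : H) (n : ℕ) (hn : 1 ≤ n) :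
    0 ≤ ⟪∑ j ∈ Finset.range (n - 1), ((n : ℝ) - 1 - j) • (A ^ j) ξ, ξ⟫ := by
  set m := n - 1 with hm
  have hcast : (n : ℝ) - 1 = (m : ℝ) := by
    rw [hm, Nat.cast_sub hn]; simp
  set c : ℕ → ℝ := fun j => ⟪(A ^ j) ξ, ξ⟫ with hc
  -- powers of A are self-adjoint
  have hpow : ∀ (j : ℕ) (x y : H), ⟪(A ^ j) x, y⟫ = ⟪x, (A ^ j) y⟫ := by
    intro j
    induction j with
    | zero => simp
    | succ k ih =>
      intro x y
      have hcomm : A ^ (k + 1) = A * A ^ k := (pow_succ A k).symm ▸ pow_succ' A k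
      rw [pow_succ, ContinuousLinearMap.mul_apply, ih, hsa, ← pow_succ, hcomm,
        ContinuousLinearMap.mul_apply]
  have heven : ∀ i : ℕ, c (2 * i) = ⟪(A ^ i) ξ, (A ^ i) ξ⟫ := by
    intro i
    have : (2 : ℕ) * i = i + i := by ring
    rw [hc]; simp only
    rw [this, pow_add, ContinuousLinearMap.mul_apply, hpow]
  have hodd : ∀ i : ℕ, c (2 * i + 1) = ⟪A ((A ^ i) ξ), (A ^ i) ξ⟫ := by
    intro i
    have h1 : (2 : ℕ) * i + 1 = i + (i + 1) := by ring
    rw [hc]; simp only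
    rw [h1, pow_add, ContinuousLinearMap.mul_apply, hpow, pow_succ',
      ContinuousLinearMap.mul_apply]
  have hpair : ∀ i : ℕ, 0 ≤ c (2 * i) + c (2 * i + 1) := by
    intro i
    set x := (A ^ i) ξ with hx
    have hb : |⟪A x, x⟫| ≤ ‖x‖ ^ 2 := by
      have h1 := abs_real_inner_le_norm (A x) x
      have h2 := A.le_opNorm x
      have h3 : ‖A x‖ ≤ ‖x‖ := by
        calc ‖A x‖ ≤ ‖A‖ * ‖x‖ := h2
        _ ≤ 1 * ‖x‖ := by
          exact mul_le_mul_of_nonneg_right hA (norm_nonneg _)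
        _ = ‖x‖ := one_mul _
      calc |⟪A x, x⟫| ≤ ‖A x‖ * ‖x‖ := h1
      _ ≤ ‖x‖ * ‖x‖ := mul_le_mul_of_nonneg_right h3 (norm_nonneg _)
      _ = ‖x‖ ^ 2 := (sq ‖x‖).symm
    have he : c (2 * i) = ‖x‖ ^ 2 := by
      rw [heven i, ← hx, real_inner_self_eq_norm_sq]
    have ho : c (2 * i + 1) = ⟪A x, x⟫ := hodd i
    have := neg_abs_le ⟪A x, x⟫
    rw [he, ho]
    linarith
  have hevennn : ∀ i : ℕ, 0 ≤ c (2 * i) := by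
    intro i
    rw [heven i]
    exact real_inner_self_nonneg
  -- partial sums are nonnegative
  set T : ℕ → ℝ := fun k => ∑ j ∈ Finset.range k, c j with hT
  have hT2 : ∀ i : ℕ, 0 ≤ T (2 * i) ∧ 0 ≤ T (2 * i + 1) := by
    intro i
    induction i with
    | zero =>
      constructor
      · simp [hT]
      · have : T 1 = c 0 := by simp [hT]
        rw [this]
        simpa using hevennn 0
    | succ k ih =>
      have hstep : T (2 * (k + 1)) = T (2 * k) + (c (2 * k) + c (2 * k + 1)) := by
        have h1 : 2 * (k + 1) = (2 * k + 1) + 1 := by ring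
        rw [hT]; simp only
        rw [h1, Finset.sum_range_succ, Finset.sum_range_succ]
        ring
      have h2 : 0 ≤ T (2 * (k + 1)) := by
        rw [hstep]
        have := hpair k
        linarith [ih.1]
      refine ⟨h2, ?_⟩
      have hstep2 : T (2 * (k + 1) + 1) = T (2 * (k + 1)) + c (2 * (k + 1)) := by
        rw [hT]; simp only [Finset.sum_range_succ]
      rw [hstep2]
      have := hevennn (k + 1)
      linarith
  have hTnn : ∀ k : ℕ, 0 ≤ T k := by
    intro k
    rcases Nat.even_or_odd k with ⟨i, hi⟩ | ⟨i, hi⟩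
    · have : k = 2 * i := by omega
      rw [this]; exact (hT2 i).1
    · rw [hi]; exact (hT2 i).2
  -- rewrite weighted sum as sum of partial sums
  have hiden : ∀ M : ℕ, ∑ j ∈ Finset.range M, ((M : ℝ) - j) * c j
      = ∑ k ∈ Finset.range M, T (k + 1) := by
    intro M
    induction M with
    | zero => simp
    | succ M ih =>
      have h1 : ∑ j ∈ Finset.range (M + 1), (((M : ℕ) + 1 : ℝ) - j) * c j
          = (∑ j ∈ Finset.range M, ((M : ℝ) - j) * c j) + T (M + 1) := by
        rw [hT]; simp only
        rw [Finset.sum_range_succ, Finset.sum_range_succ c]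
        have hsplit : ∀ j ∈ Finset.range M,
            (((M : ℕ) + 1 : ℝ) - j) * c j = ((M : ℝ) - j) * c j + c j := by
          intro j _; ring
        rw [Finset.sum_congr rfl hsplit, Finset.sum_add_distrib]
        ring
      push_cast at h1 ⊢
      rw [h1, ih, Finset.sum_range_succ]
  -- main computation
  have hmain : ⟪∑ j ∈ Finset.range m, ((n : ℝ) - 1 - j) • (A ^ j) ξ, ξ⟫
      = ∑ j ∈ Finset.range m, ((m : ℝ) - j) * c j := by
    rw [sum_inner]
    refine Finset.sum_congr rfl fun j _ => ?_
    rw [real_inner_smul_left, hcast]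
  rw [hmain, hiden]
  exact Finset.sum_nonneg fun k _ => hTnn (k + 1)
end
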